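/- arXiv:2201.02559 — 10 statements merged into one kernel-verified Lean document; each statement's English description precedes it below -/
import Mathlib

section
/- Fix n ≥ 1. Let V be the subgroup of the group of all permutations of ℕ consisting of permutations σ with σ(i) = i for every i < n, and let f be the involution of ℕ defined by f(i) = n + i for i < n, f(i) = i − n for n ≤ i < 2n, and f(i) = i for i ≥ 2n. Then every permutation φ of ℕ can be written as φ = v₁ ∘ f ∘ v₂ ∘ f ∘ v₃ with v₁, v₂, v₃ ∈ V. (This is the algebraic core of the proof that the group S_∞ of all bijections of a countable set is coarsely bounded.) -/
open Classical in
lemma key_extend (n : ℕ) (s : Finset ℕ) (g : ℕ → ℕ)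
    (hs : ∀ i ∈ s, n ≤ i) (hg : ∀ i ∈ s, n ≤ g i) (hinj : Set.InjOn g s) :
    ∃ v : Equiv.Perm ℕ, (∀ i, i < n → v i = i) ∧ ∀ i ∈ s, v i = g i := by
  set β := {x : ℕ // n ≤ x}
  haveI : Infinite β := Set.infinite_coe_iff.mpr (Set.Ici_infinite n)
  set gg : β → β := fun x => if h : x.1 ∈ s then ⟨g x.1, hg _ h⟩ else x with hgg
  set S : Set β := {x | x.1 ∈ s} with hS
  have hSfin : S.Finite := Set.Finite.preimage Subtype.val_injective.injOn s.finite_toSet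
  have hinj' : Set.InjOn gg S := by
    intro x hx y hy hxy
    simp only [hgg, dif_pos (show x.1 ∈ s from hx), dif_pos (show y.1 ∈ s from hy)] at hxy
    exact Subtype.ext (hinj hx hy (congrArg Subtype.val hxy))
  have hTfin : (gg '' S).Finite := hSfin.image _
  haveI : Infinite ↥Sᶜ := (hSfin.infinite_compl).to_subtype
  haveI : Infinite ↥(gg '' S)ᶜ := (hTfin.infinite_compl).to_subtype
  obtain ⟨e₁⟩ : Nonempty (↥Sᶜ ≃ ↥(gg '' S)ᶜ) := nonempty_equiv_of_countable
  let e₀ : S ≃ (gg '' S) := Equiv.Set.imageOfInjOn gg S hinj'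
  let π : Equiv.Perm β :=
    (Equiv.Set.sumCompl S).symm.trans ((e₀.sumCongr e₁).trans (Equiv.Set.sumCompl (gg '' S)))
  let v : Equiv.Perm ℕ := Equiv.Perm.subtypeCongr π (Equiv.refl {x : ℕ // ¬ n ≤ x})
  refine ⟨v, fun i hi => ?_, fun i hi => ?_⟩
  · exact Equiv.Perm.subtypeCongr.right_apply _ _ (by omega)
  · have hni : n ≤ i := hs i hi
    have h1 : v i = (π ⟨i, hni⟩ : β).1 := Equiv.Perm.subtypeCongr.left_apply _ _ hni
    rw [h1]
    have hmem : (⟨i, hni⟩ : β) ∈ S := hi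
    have h2 : π ⟨i, hni⟩ = gg ⟨i, hni⟩ := by
      simp only [π, Equiv.trans_apply, Equiv.Set.sumCompl_symm_apply_of_mem hmem,
        Equiv.sumCongr_apply, Sum.map_inl]
      exact Equiv.Set.sumCompl_apply_inl _ _
    rw [h2]
    simp only [hgg, dif_pos hi]

/-- Algebraic core of the proof that `S_∞` is coarsely bounded: fix `n ≥ 1`, let
`V` be the pointwise stabilizer of `{0, …, n−1}` in the permutation group of `ℕ`,
and let `f` be the involution swapping `i` and `n + i` for `i < n` and fixing
everything `≥ 2n`.  Then every permutation `φ` of `ℕ` can be written as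
`φ = v₁ ∘ f ∘ v₂ ∘ f ∘ v₃` with `v₁, v₂, v₃ ∈ V`. -/
theorem perm_decomposition_pointwise_stabilizer (n : ℕ) (hn : 1 ≤ n)
    (f : Equiv.Perm ℕ)
    (hf₁ : ∀ i, i < n → f i = n + i)
    (hf₂ : ∀ i, n ≤ i → i < 2 * n → f i = i - n)
    (hf₃ : ∀ i, 2 * n ≤ i → f i = i)
    (φ : Equiv.Perm ℕ) :
    ∃ v₁ v₂ v₃ : Equiv.Perm ℕ,
      (∀ i, i < n → v₁ i = i) ∧ (∀ i, i < n → v₂ i = i) ∧ (∀ i, i < n → v₃ i = i) ∧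
      φ = v₁ * f * v₂ * f * v₃ := by
  -- v₂ : on [n, 2n), sends n+i to n+φ(i) if φ(i) < n, and to 2n+i otherwise
  obtain ⟨v₂, hv₂fix, hv₂⟩ :=
    key_extend n ((Finset.range n).image (n + ·))
      (fun x => if φ (x - n) < n then n + φ (x - n) else n + x)
      (by intro i hi; simp only [Finset.mem_image, Finset.mem_range] at hi
          obtain ⟨j, hj, rfl⟩ := hi; omega)
      (by intro i hi; split <;> omega)
      (by intro x hx y hy hxy
          simp only [Finset.coe_image, Set.mem_image, Finset.coe_range, Set.mem_Iio] at hx hy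
          obtain ⟨a, ha, rfl⟩ := hx; obtain ⟨b, hb, rfl⟩ := hy
          simp only [Nat.add_sub_cancel_left] at hxy
          split at hxy <;> split at hxy
          · have := φ.injective (by omega : φ a = φ b); omega
          · omega
          · omega
          · omega)
  -- v₁ : sends 2n+i to φ(i) for those i < n with φ(i) ≥ n
  obtain ⟨v₁, hv₁fix, hv₁⟩ :=
    key_extend n (((Finset.range n).filter (fun i => n ≤ φ i)).image (fun i => 2 * n + i))
      (fun x => φ (x - 2 * n))
      (by intro i hi; simp only [Finset.mem_image, Finset.mem_filter, Finset.mem_range] at hi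
          obtain ⟨j, hj, rfl⟩ := hi; omega)
      (by intro i hi; simp only [Finset.mem_image, Finset.mem_filter, Finset.mem_range] at hi
          obtain ⟨j, hj, rfl⟩ := hi; simpa using hj.2)
      (by intro x hx y hy hxy
          simp only [Finset.coe_image, Set.mem_image, Finset.coe_filter, Set.mem_setOf_eq,
            Finset.mem_range] at hx hy
          obtain ⟨a, ha, rfl⟩ := hx; obtain ⟨b, hb, rfl⟩ := hy
          simp only [Nat.add_sub_cancel_left] at hxy
          have := φ.injective hxy; omega)
  refine ⟨v₁, v₂, (v₁ * f * v₂ * f)⁻¹ * φ, hv₁fix, hv₂fix, fun i hi => ?_, by group⟩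
  have key : (v₁ * f * v₂ * f) i = φ i := by
    simp only [Equiv.Perm.mul_apply]
    rw [hf₁ i hi]
    have hmem : n + i ∈ (Finset.range n).image (n + ·) := by
      simp only [Finset.mem_image, Finset.mem_range]; exact ⟨i, hi, rfl⟩
    rw [hv₂ _ hmem]
    simp only [Nat.add_sub_cancel_left]
    by_cases h : φ i < n
    · rw [if_pos h, hf₂ (n + φ i) (by omega) (by omega)]
      simp only [Nat.add_sub_cancel_left]
      exact hv₁fix _ h
    · rw [if_neg h, hf₃ (n + (n + i)) (by omega)]
      have hmem1 : n + (n + i) ∈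
          ((Finset.range n).filter (fun i => n ≤ φ i)).image (fun i => 2 * n + i) := by
        simp only [Finset.mem_image, Finset.mem_filter, Finset.mem_range]
        exact ⟨i, ⟨hi, by omega⟩, by omega⟩
      rw [hv₁ _ hmem1]
      congr 1; omega
  calc ((v₁ * f * v₂ * f)⁻¹ * φ) i = (v₁ * f * v₂ * f)⁻¹ ((v₁ * f * v₂ * f) i) := by
        rw [key]; rfl
    _ = i := Equiv.symm_apply_apply _ _
end

section
/- Let C be a free group and let A ≤ B ≤ C be subgroups such that A is a free factor of C. Then A is a free factor of B. -/
open Monoid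

/-- A subgroup `A` of a group `G` is a *free factor* of `G` if there is a subgroup
`P ≤ G` such that the canonical homomorphism `A ∗ P → G` from the free (coproduct)
product, induced by the two inclusions, is an isomorphism (i.e. bijective). -/
def IsFreeFactor {G : Type*} [Group G] (A : Subgroup G) : Prop :=
  ∃ P : Subgroup G, Function.Bijective ⇑(Monoid.Coprod.lift A.subtype P.subtype)

section aux

variable {M N M' N' : Type*} [Monoid M] [Monoid N] [Monoid M'] [Monoid N']

/-- congruence of coproducts -/
def coprodCongr (eM : M ≃* M') (eN : N ≃* N') : Coprod M N ≃* Coprod M' N' where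
  toFun := Coprod.map eM.toMonoidHom eN.toMonoidHom
  invFun := Coprod.map eM.symm.toMonoidHom eN.symm.toMonoidHom
  left_inv x := by
    rw [Coprod.map_map]
    have h1 : eM.symm.toMonoidHom.comp eM.toMonoidHom = MonoidHom.id M := by ext; simp
    have h2 : eN.symm.toMonoidHom.comp eN.toMonoidHom = MonoidHom.id N := by ext; simp
    rw [h1, h2, Coprod.map_id_id, MonoidHom.id_apply]
  right_inv x := by
    rw [Coprod.map_map]
    have h1 : eM.toMonoidHom.comp eM.symm.toMonoidHom = MonoidHom.id M' := by ext; simp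
    have h2 : eN.toMonoidHom.comp eN.symm.toMonoidHom = MonoidHom.id N' := by ext; simp
    rw [h1, h2, Coprod.map_id_id, MonoidHom.id_apply]
  map_mul' := map_mul _

@[simp] lemma coprodCongr_apply (eM : M ≃* M') (eN : N ≃* N') (x : Coprod M N) :
    coprodCongr eM eN x = Coprod.map eM.toMonoidHom eN.toMonoidHom x := rfl

end aux

section transport

variable {G H : Type*} [Group G] [Group H]

theorem IsFreeFactor.map (ψ : G ≃* H) {A : Subgroup G} (h : IsFreeFactor A) :
    IsFreeFactor (A.map ψ.toMonoidHom) := by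
  obtain ⟨P, hP⟩ := h
  refine ⟨P.map ψ.toMonoidHom, ?_⟩
  set eA := A.equivMapOfInjective ψ.toMonoidHom ψ.injective with heA
  set eP := P.equivMapOfInjective ψ.toMonoidHom ψ.injective with heP
  have key : (Coprod.lift (A.map ψ.toMonoidHom).subtype (P.map ψ.toMonoidHom).subtype).comp
      (Coprod.map eA.toMonoidHom eP.toMonoidHom)
      = ψ.toMonoidHom.comp (Coprod.lift A.subtype P.subtype) := by
    apply Coprod.hom_ext <;> ext x <;>
      simp [heA, heP, Subgroup.coe_equivMapOfInjective_apply] <;> rfl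
  have hbij : Function.Bijective
      (⇑(Coprod.lift (A.map ψ.toMonoidHom).subtype (P.map ψ.toMonoidHom).subtype) ∘
        ⇑(coprodCongr eA eP)) := by
    have : ⇑(Coprod.lift (A.map ψ.toMonoidHom).subtype (P.map ψ.toMonoidHom).subtype) ∘
        ⇑(coprodCongr eA eP) = ⇑ψ ∘ ⇑(Coprod.lift A.subtype P.subtype) := by
      funext x
      exact DFunLike.congr_fun key x
    rw [this]
    exact ψ.bijective.comp hP
  exact (Function.Bijective.of_comp_iff _ (coprodCongr eA eP).bijective).mp hbij

end transport

section basecase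

variable {S Y : Type*}

/-- the iso between `FreeGroup (S ⊕ Y)` and the coproduct. -/
noncomputable def freeGroupSumEquivCoprod :
    FreeGroup (S ⊕ Y) ≃* Coprod (FreeGroup S) (FreeGroup Y) where
  toFun := FreeGroup.lift (Sum.elim (fun s => Coprod.inl (FreeGroup.of s))
    (fun y => Coprod.inr (FreeGroup.of y)))
  invFun := Coprod.lift (FreeGroup.lift (FreeGroup.of ∘ Sum.inl))
    (FreeGroup.lift (FreeGroup.of ∘ Sum.inr))
  left_inv x := by
    have : (Coprod.lift (FreeGroup.lift (FreeGroup.of ∘ Sum.inl))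
        (FreeGroup.lift (FreeGroup.of ∘ Sum.inr))).comp
        (FreeGroup.lift (Sum.elim (fun s => Coprod.inl (FreeGroup.of s))
          (fun y => Coprod.inr (FreeGroup.of y)))) = MonoidHom.id (FreeGroup (S ⊕ Y)) := by
      apply FreeGroup.ext_hom
      rintro (s | y) <;> simp
    exact DFunLike.congr_fun this x
  right_inv x := by
    have : (FreeGroup.lift (Sum.elim (fun s => Coprod.inl (FreeGroup.of s))
        (fun y => Coprod.inr (FreeGroup.of y)))).comp
        (Coprod.lift (FreeGroup.lift (FreeGroup.of ∘ Sum.inl))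
          (FreeGroup.lift (FreeGroup.of ∘ Sum.inr)))
          = MonoidHom.id (Coprod (FreeGroup S) (FreeGroup Y)) := by
      apply Coprod.hom_ext
      · apply FreeGroup.ext_hom; intro a; simp
      · apply FreeGroup.ext_hom; intro a; simp
    exact DFunLike.congr_fun this x
  map_mul' := map_mul _

@[simp] lemma freeGroupSumEquivCoprod_of_inl (s : S) :
    (freeGroupSumEquivCoprod (S := S) (Y := Y)) (FreeGroup.of (Sum.inl s))
      = Coprod.inl (FreeGroup.of s) := by
  simp [freeGroupSumEquivCoprod]

@[simp] lemma freeGroupSumEquivCoprod_of_inr (y : Y) :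
    (freeGroupSumEquivCoprod (S := S) (Y := Y)) (FreeGroup.of (Sum.inr y))
      = Coprod.inr (FreeGroup.of y) := by
  simp [freeGroupSumEquivCoprod]

theorem isFreeFactor_closure_inl :
    IsFreeFactor (Subgroup.closure
      (Set.range (FreeGroup.of ∘ Sum.inl)) : Subgroup (FreeGroup (S ⊕ Y))) := by
  set i : FreeGroup S →* FreeGroup (S ⊕ Y) := FreeGroup.lift (FreeGroup.of ∘ Sum.inl) with hi
  set j : FreeGroup Y →* FreeGroup (S ⊕ Y) := FreeGroup.lift (FreeGroup.of ∘ Sum.inr) with hj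
  have hiA : i.range = Subgroup.closure (Set.range (FreeGroup.of ∘ Sum.inl)) :=
    FreeGroup.range_lift_eq_closure
  rw [← hiA]
  refine ⟨j.range, ?_⟩
  -- i and j are injective
  have hiinj : Function.Injective ⇑i := by
    have : (FreeGroup.lift (Sum.elim FreeGroup.of (fun _ : Y => (1 : FreeGroup S)))).comp i
        = MonoidHom.id (FreeGroup S) := by
      apply FreeGroup.ext_hom; intro a; simp [hi]
    exact Function.LeftInverse.injective (g := ⇑(FreeGroup.lift (Sum.elim FreeGroup.of (fun _ : Y => (1 : FreeGroup S)))))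
      (fun a => DFunLike.congr_fun this a)
  have hjinj : Function.Injective ⇑j := by
    have : (FreeGroup.lift (Sum.elim (fun _ : S => (1 : FreeGroup Y)) FreeGroup.of)).comp j
        = MonoidHom.id (FreeGroup Y) := by
      apply FreeGroup.ext_hom; intro a; simp [hj]
    exact Function.LeftInverse.injective (g := ⇑(FreeGroup.lift (Sum.elim (fun _ : S => (1 : FreeGroup Y)) FreeGroup.of)))
      (fun a => DFunLike.congr_fun this a)
  set eA : FreeGroup S ≃* i.range := MulEquiv.ofBijective i.rangeRestrict
    ⟨fun a b hab => hiinj (by simpa [Subtype.ext_iff] using hab), i.rangeRestrict_surjective⟩ with heA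
  set eP : FreeGroup Y ≃* j.range := MulEquiv.ofBijective j.rangeRestrict
    ⟨fun a b hab => hjinj (by simpa [Subtype.ext_iff] using hab), j.rangeRestrict_surjective⟩ with heP
  have key : (Coprod.lift i.range.subtype j.range.subtype).comp
      (Coprod.map eA.toMonoidHom eP.toMonoidHom)
      = (freeGroupSumEquivCoprod (S := S) (Y := Y)).symm.toMonoidHom := by
    apply Coprod.hom_ext <;> apply FreeGroup.ext_hom <;> intro a <;>
      simp [heA, heP, freeGroupSumEquivCoprod, hi, hj] <;> rfl
  have hbij : Function.Bijective (⇑(Coprod.lift i.range.subtype j.range.subtype) ∘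
      ⇑(coprodCongr eA eP)) := by
    have : ⇑(Coprod.lift i.range.subtype j.range.subtype) ∘ ⇑(coprodCongr eA eP)
        = ⇑(freeGroupSumEquivCoprod (S := S) (Y := Y)).symm := by
      funext x; exact DFunLike.congr_fun key x
    rw [this]
    exact (freeGroupSumEquivCoprod (S := S) (Y := Y)).symm.bijective
  exact (Function.Bijective.of_comp_iff _ (coprodCongr eA eP).bijective).mp hbij

end basecase

section genclosure

theorem isFreeFactor_closure_range_of_injective {E S : Type*} (e₀ : S → E)
    (he : Function.Injective e₀) :
    IsFreeFactor (Subgroup.closure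
      (Set.range (FreeGroup.of ∘ e₀)) : Subgroup (FreeGroup E)) := by
  classical
  let q : S ⊕ ((Set.range e₀)ᶜ : Set E) ≃ E :=
    ((Equiv.ofInjective e₀ he).sumCongr (Equiv.refl _)).trans (Equiv.Set.sumCompl _)
  have h0 := isFreeFactor_closure_inl (S := S) (Y := ((Set.range e₀)ᶜ : Set E))
  have h1 := h0.map (FreeGroup.freeGroupCongr q)
  convert h1 using 1
  rw [MonoidHom.map_closure]
  congr 1
  rw [← Set.range_comp]
  have : ⇑(FreeGroup.freeGroupCongr q).toMonoidHom ∘ FreeGroup.of ∘ Sum.inl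
      = FreeGroup.of ∘ e₀ := by
    funext s
    show FreeGroup.map q (FreeGroup.of (Sum.inl s)) = _
    rw [FreeGroup.map.of]
    simp [q]
  rw [this]

end genclosure

section schreier

variable {X : Type*} (B : Subgroup (FreeGroup X))

/-- vertices of the Schreier graph: left cosets -/
abbrev SchreierV := FreeGroup X ⧸ B

/-- basepoint -/
def schreierBase : SchreierV B := ((1 : FreeGroup X) : SchreierV B)

lemma schreier_smul_mk (g a : FreeGroup X) :
    g • ((a : SchreierV B)) = ((g * a : FreeGroup X) : SchreierV B) := by
  rw [MulAction.Quotient.smul_mk, smul_eq_mul]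

lemma schreier_smul_base (g : FreeGroup X) :
    g • schreierBase B = ((g : FreeGroup X) : SchreierV B) := by
  rw [schreierBase, schreier_smul_mk, mul_one]

open Classical in
/-- distance to basepoint -/
noncomputable def schreierD (v : SchreierV B) : ℕ :=
  Nat.find (⟨(Quotient.out v).norm, Quotient.out v, rfl, QuotientGroup.out_eq' v⟩ :
    ∃ n, ∃ g : FreeGroup X, g.norm = n ∧ (g : SchreierV B) = v)

open Classical in
lemma schreierD_spec (v : SchreierV B) :
    ∃ g : FreeGroup X, g.norm = schreierD B v ∧ (g : SchreierV B) = v :=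
  Nat.find_spec (⟨(Quotient.out v).norm, Quotient.out v, rfl, QuotientGroup.out_eq' v⟩ :
    ∃ n, ∃ g : FreeGroup X, g.norm = n ∧ (g : SchreierV B) = v)

open Classical in
lemma schreierD_le (v : SchreierV B) (g : FreeGroup X) (h : (g : SchreierV B) = v) :
    schreierD B v ≤ g.norm :=
  Nat.find_min' _ ⟨g, rfl, h⟩

lemma exists_schreier_peel (v : SchreierV B) (hv : v ≠ schreierBase B) :
    ∃ (ℓ : FreeGroup X) (v' : SchreierV B),
      ((∃ x : X, ℓ = FreeGroup.of x ∨ ℓ = (FreeGroup.of x)⁻¹) ∧ v = ℓ • v') ∧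
      schreierD B v' < schreierD B v := by
  classical
  obtain ⟨g, hgn, hgv⟩ := schreierD_spec B v
  have hg1 : g ≠ 1 := by
    rintro rfl
    exact hv (hgv.symm.trans rfl)
  rcases hw : g.toWord with _ | ⟨⟨x, b⟩, rest⟩
  · exact absurd (FreeGroup.toWord_eq_nil_iff.mp hw) hg1
  · have hgmk : g = FreeGroup.mk [(x, b)] * FreeGroup.mk rest := by
      rw [FreeGroup.mul_mk, List.singleton_append, ← hw, FreeGroup.mk_toWord]
    refine ⟨FreeGroup.mk [(x, b)], ((FreeGroup.mk rest : FreeGroup X) : SchreierV B),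
      ⟨⟨x, ?_⟩, ?_⟩, ?_⟩
    · cases b
      · right
        show FreeGroup.mk [(x, false)] = (FreeGroup.mk [(x, true)])⁻¹
        rw [FreeGroup.inv_mk]
        rfl
      · left
        rfl
    · rw [schreier_smul_mk, ← hgmk, hgv]
    · calc schreierD B _ ≤ (FreeGroup.mk rest).norm := schreierD_le B _ _ rfl
        _ ≤ rest.length := FreeGroup.norm_mk_le
        _ < schreierD B v := by
            have : g.norm = rest.length + 1 := by
              simp [FreeGroup.norm, hw]
            omega
    
open Classical in
/-- Schreier transversal -/
noncomputable def schreierT (v : SchreierV B) : FreeGroup X :=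
  if h : v = schreierBase B then 1
  else
    (exists_schreier_peel B v h).choose *
      schreierT (exists_schreier_peel B v h).choose_spec.choose
termination_by schreierD B v
decreasing_by exact (exists_schreier_peel B v h).choose_spec.choose_spec.2

lemma schreierT_base : schreierT B (schreierBase B) = 1 := by
  rw [schreierT, dif_pos rfl]

lemma schreierT_of_ne (v : SchreierV B) (h : v ≠ schreierBase B) :
    schreierT B v = (exists_schreier_peel B v h).choose *
      schreierT B (exists_schreier_peel B v h).choose_spec.choose := by
  rw [schreierT, dif_neg h]

lemma schreierT_mk (v : SchreierV B) :
    ((schreierT B v : FreeGroup X) : SchreierV B) = v := by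
  suffices h : ∀ n (v : SchreierV B), schreierD B v ≤ n →
      ((schreierT B v : FreeGroup X) : SchreierV B) = v from h _ v le_rfl
  classical
  intro n
  induction n with
  | zero =>
    intro v hv
    obtain ⟨g, hgn, hgv⟩ := schreierD_spec B v
    have : g = 1 := by
      rw [← FreeGroup.norm_eq_zero]
      omega
    subst this
    have hvb : v = schreierBase B := hgv.symm
    rw [hvb, schreierT_base]
    rfl
  | succ n ih =>
    intro v hv
    by_cases h : v = schreierBase B
    · rw [h, schreierT_base]; rfl
    · obtain ⟨⟨x, hx⟩, hveq⟩ := (exists_schreier_peel B v h).choose_spec.choose_spec.1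
      have hlt := (exists_schreier_peel B v h).choose_spec.choose_spec.2
      rw [schreierT_of_ne B v h, ← schreier_smul_mk]
      rw [ih _ (by omega)]
      exact hveq.symm

end schreier

section schreier2

variable {X : Type*} (B : Subgroup (FreeGroup X))

lemma schreier_coe_eq_base_of_mem {g : FreeGroup X} (hg : g ∈ B) :
    ((g : FreeGroup X) : SchreierV B) = schreierBase B :=
  (QuotientGroup.eq.mpr (by simpa using inv_mem hg)).symm.trans rfl

/-- tree edges -/
def SchreierIsTree (p : X × SchreierV B) : Prop :=
  schreierT B (FreeGroup.of p.1 • p.2) = FreeGroup.of p.1 * schreierT B p.2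

/-- non-tree edges -/
def SchreierEdge := {p : X × SchreierV B // ¬ SchreierIsTree B p}

/-- free group on non-tree edges -/
abbrev SchreierGr := FreeGroup (SchreierEdge B)

/-- permutations acting on vertex-indexed families -/
def schreierPhi : Equiv.Perm (SchreierV B) →* MulAut (SchreierV B → SchreierGr B) where
  toFun π := MulEquiv.arrowCongr π (MulEquiv.refl _)
  map_one' := by ext f v; rfl
  map_mul' π τ := by ext f v; rfl

/-- the wreath-type group -/
abbrev SchreierW := (SchreierV B → SchreierGr B) ⋊[schreierPhi B] Equiv.Perm (SchreierV B)

open Classical in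
/-- edge-reading labels -/
noncomputable def schreierFx (x : X) (v : SchreierV B) : SchreierGr B :=
  if h : SchreierIsTree B (x, (FreeGroup.of x)⁻¹ • v) then 1
  else FreeGroup.of (⟨(x, (FreeGroup.of x)⁻¹ • v), h⟩ : SchreierEdge B)

/-- the cocycle homomorphism -/
noncomputable def schreierSig : FreeGroup X →* SchreierW B :=
  FreeGroup.lift (fun x => ⟨schreierFx B x, MulAction.toPerm (FreeGroup.of x)⟩)

/-- the reading function -/
noncomputable def schreierF (c : FreeGroup X) : SchreierV B → SchreierGr B :=
  (schreierSig B c).left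

lemma schreierSig_right (c : FreeGroup X) :
    (schreierSig B c).right = MulAction.toPerm c := by
  have : SemidirectProduct.rightHom.comp (schreierSig B)
      = MulAction.toPermHom (FreeGroup X) (SchreierV B) := by
    apply FreeGroup.ext_hom
    intro x
    simp [schreierSig]
  exact DFunLike.congr_fun this c

lemma schreierF_one (v : SchreierV B) : schreierF B 1 v = 1 := by
  unfold schreierF
  rw [map_one, SemidirectProduct.one_left]
  rfl

lemma schreierF_mul (c d : FreeGroup X) (v : SchreierV B) :
    schreierF B (c * d) v = schreierF B c v * schreierF B d (c⁻¹ • v) := by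
  unfold schreierF
  rw [map_mul, SemidirectProduct.mul_left, Pi.mul_apply, schreierSig_right]
  rfl

lemma schreierF_inv (c : FreeGroup X) (v : SchreierV B) :
    schreierF B c⁻¹ v = (schreierF B c (c • v))⁻¹ := by
  unfold schreierF
  rw [map_inv, SemidirectProduct.inv_left, map_inv, schreierSig_right]
  rfl

lemma schreierF_of (x : X) (v : SchreierV B) :
    schreierF B (FreeGroup.of x) v = schreierFx B x v := by
  unfold schreierF schreierSig
  rw [FreeGroup.lift_apply_of]

lemma schreierFx_of_not_tree (x : X) (u : SchreierV B) (he : ¬SchreierIsTree B (x, u)) :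
    schreierFx B x (FreeGroup.of x • u) = FreeGroup.of (⟨(x, u), he⟩ : SchreierEdge B) := by
  unfold schreierFx
  have h2 : (FreeGroup.of x)⁻¹ • FreeGroup.of x • u = u := inv_smul_smul _ _
  rw [dif_neg (by rw [h2]; exact he)]
  congr 1
  apply Subtype.ext
  show ((x, (FreeGroup.of x)⁻¹ • FreeGroup.of x • u) : X × SchreierV B) = (x, u)
  rw [h2]

/-- read edges back into the free group -/
noncomputable def schreierPi : SchreierGr B →* FreeGroup X :=
  FreeGroup.lift (fun e =>
    (schreierT B (FreeGroup.of e.1.1 • e.1.2))⁻¹ * FreeGroup.of e.1.1 * schreierT B e.1.2)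

lemma schreierPi_F (c : FreeGroup X) : ∀ v,
    schreierPi B (schreierF B c v) = (schreierT B v)⁻¹ * c * schreierT B (c⁻¹ • v) := by
  induction c using FreeGroup.induction_on with
  | C1 =>
    intro v
    rw [schreierF_one, map_one]
    simp
  | of x =>
    intro v
    rw [schreierF_of]
    unfold schreierFx
    split_ifs with h
    · have h' : schreierT B v = FreeGroup.of x * schreierT B ((FreeGroup.of x)⁻¹ • v) := by
        have := h
        unfold SchreierIsTree at this
        rwa [smul_inv_smul] at this
      rw [map_one, h']
      group
    · rw [schreierPi]
      erw [FreeGroup.lift_apply_of]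
      rw [smul_inv_smul]
  | inv_of x ih =>
    intro v
    rw [schreierF_inv, map_inv, ih, inv_smul_smul, inv_inv]
    group
  | mul c d ihc ihd =>
    intro v
    rw [schreierF_mul, map_mul, ihc, ihd, mul_inv_rev, mul_smul]
    group

lemma schreierF_trans : ∀ v, schreierF B (schreierT B v) v = 1 := by
  suffices h : ∀ n v, schreierD B v ≤ n → schreierF B (schreierT B v) v = 1 from
    fun v => h _ v le_rfl
  intro n
  induction n with
  | zero =>
    intro v hv
    obtain ⟨g, hgn, hgv⟩ := schreierD_spec B v
    classical
    have hg : g = 1 := by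
      rw [← FreeGroup.norm_eq_zero]
      omega
    subst hg
    have hvb : v = schreierBase B := hgv.symm
    rw [hvb, schreierT_base, schreierF_one]
  | succ n ih =>
    intro v hv
    by_cases h : v = schreierBase B
    · rw [h, schreierT_base, schreierF_one]
    · obtain ⟨⟨x, hx⟩, hveq⟩ := (exists_schreier_peel B v h).choose_spec.choose_spec.1
      have hlt := (exists_schreier_peel B v h).choose_spec.choose_spec.2
      set ℓ := (exists_schreier_peel B v h).choose with hℓ
      set v' := (exists_schreier_peel B v h).choose_spec.choose with hv'
      have htv : schreierT B v = ℓ * schreierT B v' := schreierT_of_ne B v h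
      have hinv : ℓ⁻¹ • v = v' := by rw [hveq, inv_smul_smul]
      rw [htv, schreierF_mul, hinv, ih v' (by omega), mul_one]
      rcases hx with hx | hx
      · -- ℓ = of x
        rw [hx, schreierF_of]
        unfold schreierFx
        rw [dif_pos]
        show schreierT B (FreeGroup.of x • ((FreeGroup.of x)⁻¹ • v))
          = FreeGroup.of x * schreierT B ((FreeGroup.of x)⁻¹ • v)
        rw [smul_inv_smul, ← hx, hinv, htv, hx]
      · -- ℓ = (of x)⁻¹
        rw [hx, schreierF_inv, schreierF_of]
        unfold schreierFx
        rw [dif_pos]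
        · rw [inv_one]
        show schreierT B (FreeGroup.of x • ((FreeGroup.of x)⁻¹ • (FreeGroup.of x • v)))
          = FreeGroup.of x * schreierT B ((FreeGroup.of x)⁻¹ • (FreeGroup.of x • v))
        rw [inv_smul_smul]
        have hxv : FreeGroup.of x • v = v' := by
          rw [hveq, ← hℓ, hx, smul_inv_smul]
        rw [hxv, htv, hx]
        group

lemma schreier_edge_mem (e : SchreierEdge B) :
    (schreierT B (FreeGroup.of e.1.1 • e.1.2))⁻¹ * FreeGroup.of e.1.1 * schreierT B e.1.2 ∈ B := by
  set w := (schreierT B (FreeGroup.of e.1.1 • e.1.2))⁻¹ * FreeGroup.of e.1.1 * schreierT B e.1.2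
    with hw
  have hbase : (w : SchreierV B) = ((1 : FreeGroup X) : SchreierV B) := by
    have h1 : (w : SchreierV B) = w • schreierBase B := (schreier_smul_base B w).symm
    rw [h1, hw]
    rw [mul_smul, mul_smul]
    rw [show schreierT B e.1.2 • schreierBase B = e.1.2 from
      (schreier_smul_base B _).trans (schreierT_mk B _)]
    rw [inv_smul_eq_iff]
    show FreeGroup.of e.1.1 • e.1.2
        = schreierT B (FreeGroup.of e.1.1 • e.1.2) • schreierBase B
    exact ((schreier_smul_base B _).trans (schreierT_mk B _)).symm
  have := QuotientGroup.eq.mp hbase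
  simpa using this

/-- the inverse iso candidate, into `B` -/
noncomputable def schreierPi' : SchreierGr B →* B :=
  FreeGroup.lift (fun e => (⟨_, schreier_edge_mem B e⟩ : B))

lemma schreierPi'_coe (g : SchreierGr B) :
    ((schreierPi' B g : B) : FreeGroup X) = schreierPi B g := by
  have : B.subtype.comp (schreierPi' B) = schreierPi B := by
    apply FreeGroup.ext_hom
    intro e
    simp [schreierPi', schreierPi]
  exact DFunLike.congr_fun this g

/-- reading map restricted to `B`, a homomorphism -/
noncomputable def schreierSigB : B →* SchreierGr B where
  toFun b := schreierF B (b : FreeGroup X) (schreierBase B)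
  map_one' := by
    show schreierF B ((1 : B) : FreeGroup X) (schreierBase B) = 1
    rw [OneMemClass.coe_one, schreierF_one]
  map_mul' b b' := by
    show schreierF B ((b * b' : B) : FreeGroup X) (schreierBase B)
      = schreierF B (b : FreeGroup X) (schreierBase B)
        * schreierF B (b' : FreeGroup X) (schreierBase B)
    rw [Subgroup.coe_mul, schreierF_mul]
    congr 1
    rw [show ((b : FreeGroup X))⁻¹ = ((b⁻¹ : B) : FreeGroup X) from rfl]
    rw [schreier_smul_base, schreier_coe_eq_base_of_mem B (b⁻¹ : B).2]

lemma schreier_pi'_sigB (b : B) : schreierPi' B (schreierSigB B b) = b := by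
  apply Subtype.ext
  rw [schreierPi'_coe]
  show schreierPi B (schreierF B (b : FreeGroup X) (schreierBase B)) = b
  rw [schreierPi_F, schreierT_base]
  rw [show ((b : FreeGroup X))⁻¹ = ((b⁻¹ : B) : FreeGroup X) from rfl]
  rw [schreier_smul_base, schreier_coe_eq_base_of_mem B (b⁻¹ : B).2, schreierT_base]
  group

lemma schreier_sigB_pi' (g : SchreierGr B) : schreierSigB B (schreierPi' B g) = g := by
  have key : (schreierSigB B).comp (schreierPi' B) = MonoidHom.id (SchreierGr B) := by
    apply FreeGroup.ext_hom
    rintro ⟨⟨x, u⟩, he⟩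
    rw [MonoidHom.comp_apply, MonoidHom.id_apply]
    rw [show schreierPi' B (FreeGroup.of ⟨(x, u), he⟩)
      = ⟨(schreierT B (FreeGroup.of x • u))⁻¹ * FreeGroup.of x * schreierT B u,
        schreier_edge_mem B ⟨(x, u), he⟩⟩ from FreeGroup.lift_apply_of]
    show schreierF B ((schreierT B (FreeGroup.of x • u))⁻¹ * FreeGroup.of x * schreierT B u)
      (schreierBase B) = _
    rw [mul_assoc, schreierF_mul, schreierF_inv, inv_inv,
      show schreierT B (FreeGroup.of x • u) • schreierBase B = FreeGroup.of x • u from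
        (schreier_smul_base B _).trans (schreierT_mk B _),
      schreierF_trans, inv_one, one_mul,
      schreierF_mul, inv_smul_smul, schreierF_trans, mul_one, schreierF_of,
      schreierFx_of_not_tree B x u he]
    rfl
  exact DFunLike.congr_fun key g

end schreier2

section schreier3

variable {X : Type*} (B : Subgroup (FreeGroup X))

lemma schreierPi'_bijective : Function.Bijective ⇑(schreierPi' B) := by
  constructor
  · exact Function.LeftInverse.injective (g := ⇑(schreierSigB B)) (schreier_sigB_pi' B)
  · intro b
    exact ⟨schreierSigB B b, schreier_pi'_sigB B b⟩

/-- the isomorphism between the free group on non-tree edges and `B` -/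
noncomputable def schreierEquiv : SchreierGr B ≃* B :=
  MulEquiv.ofBijective (schreierPi' B) (schreierPi'_bijective B)

theorem schreier_isFreeFactor_subgroupOf (X₀ : Set X)
    (hAB : Subgroup.closure (FreeGroup.of '' X₀) ≤ B) :
    IsFreeFactor ((Subgroup.closure (FreeGroup.of '' X₀)).subgroupOf B) := by
  classical
  set A := Subgroup.closure (FreeGroup.of '' X₀) with hA
  -- each x ∈ X₀ gives a non-tree edge at the base point
  have hmem : ∀ x : X₀, FreeGroup.of (x : X) ∈ B :=
    fun x => hAB (Subgroup.subset_closure ⟨x, x.2, rfl⟩)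
  have hbase : ∀ x : X₀, FreeGroup.of (x : X) • schreierBase B = schreierBase B := by
    intro x
    rw [schreier_smul_base]
    exact schreier_coe_eq_base_of_mem B (hmem x)
  have hnottree : ∀ x : X₀, ¬ SchreierIsTree B ((x : X), schreierBase B) := by
    intro x ht
    unfold SchreierIsTree at ht
    rw [hbase x, schreierT_base, mul_one] at ht
    exact FreeGroup.of_ne_one (x : X) ht.symm
  set e₀ : X₀ → SchreierEdge B := fun x => ⟨((x : X), schreierBase B), hnottree x⟩ with he₀
  have he₀inj : Function.Injective e₀ := by
    intro a b hab
    apply Subtype.ext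
    have := congrArg (fun e => (Subtype.val e).1) hab
    exact this
  have hff := (isFreeFactor_closure_range_of_injective e₀ he₀inj).map (schreierEquiv B)
  convert hff using 1
  symm
  rw [MonoidHom.map_closure, ← Set.range_comp]
  -- both sides are subgroups of B; compare images under B.subtype
  apply Subgroup.map_injective (Subgroup.subtype_injective B)
  rw [MonoidHom.map_closure, ← Set.range_comp, Subgroup.subgroupOf_map_subtype,
    inf_eq_left.mpr hAB]
  have hval : ⇑B.subtype ∘ (⇑(schreierEquiv B).toMonoidHom ∘ (FreeGroup.of ∘ e₀))
      = FreeGroup.of ∘ (Subtype.val : X₀ → X) := by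
    funext x
    show ((schreierPi' B (FreeGroup.of (e₀ x)) : B) : FreeGroup X) = FreeGroup.of (x : X)
    rw [show schreierPi' B (FreeGroup.of (e₀ x))
      = ⟨(schreierT B (FreeGroup.of ((e₀ x).1.1) • (e₀ x).1.2))⁻¹
          * FreeGroup.of ((e₀ x).1.1) * schreierT B ((e₀ x).1.2),
        schreier_edge_mem B (e₀ x)⟩ from FreeGroup.lift_apply_of]
    show (schreierT B (FreeGroup.of (x : X) • schreierBase B))⁻¹
        * FreeGroup.of (x : X) * schreierT B (schreierBase B) = FreeGroup.of (x : X)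
    rw [hbase x, schreierT_base]
    group
  rw [hval, hA]
  congr 1
  rw [Set.range_comp, Subtype.range_coe]

end schreier3

/-- Let `C` be a free group and `A ≤ B ≤ C` subgroups such that `A` is a free factor
of `C`. Then `A` is a free factor of `B`. -/
theorem isFreeFactor_of_le_of_isFreeFactor {C : Type*} [Group C] [IsFreeGroup C]
    (A B : Subgroup C) (hAB : A ≤ B) (hA : IsFreeFactor A) :
    IsFreeFactor (A.subgroupOf B) := by
  classical
  obtain ⟨P, hP⟩ := hA
  let Ψ : Coprod ↥A ↥P ≃* C := MulEquiv.ofBijective _ hP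
  let S := IsFreeGroup.Generators ↥A
  let T := IsFreeGroup.Generators ↥P
  let eA : FreeGroup S ≃* ↥A := (IsFreeGroup.toFreeGroup ↥A).symm
  let eP : FreeGroup T ≃* ↥P := (IsFreeGroup.toFreeGroup ↥P).symm
  let Φ : FreeGroup (S ⊕ T) ≃* C :=
    (freeGroupSumEquivCoprod.trans (coprodCongr eA eP)).trans Ψ
  have hΦof : ∀ s : S, Φ (FreeGroup.of (Sum.inl s))
      = ((eA (FreeGroup.of s) : ↥A) : C) := by
    intro s
    simp only [Φ, Ψ, MulEquiv.trans_apply, freeGroupSumEquivCoprod_of_inl,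
      coprodCongr_apply, Coprod.map_apply_inl, MulEquiv.ofBijective_apply,
      Coprod.lift_apply_inl, MulEquiv.coe_toMonoidHom]
    rfl
  set A₀ : Subgroup (FreeGroup (S ⊕ T)) :=
    Subgroup.closure (FreeGroup.of '' (Set.range (Sum.inl : S → S ⊕ T))) with hA₀
  have hmapA : Subgroup.map Φ.toMonoidHom A₀ = A := by
    rw [hA₀, MonoidHom.map_closure]
    have h1 : ⇑Φ.toMonoidHom '' (FreeGroup.of '' Set.range (Sum.inl : S → S ⊕ T))
        = ⇑A.subtype '' (⇑eA.toMonoidHom '' Set.range FreeGroup.of) := by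
      have h2 : ⇑Φ.toMonoidHom ∘ (FreeGroup.of ∘ (Sum.inl : S → S ⊕ T))
          = ⇑A.subtype ∘ (⇑eA.toMonoidHom ∘ FreeGroup.of) := by
        funext s
        exact hΦof s
      calc ⇑Φ.toMonoidHom '' (FreeGroup.of '' Set.range (Sum.inl : S → S ⊕ T))
          = Set.range (⇑Φ.toMonoidHom ∘ (FreeGroup.of ∘ (Sum.inl : S → S ⊕ T))) := by
            rw [Set.range_comp, Set.range_comp]
        _ = Set.range (⇑A.subtype ∘ (⇑eA.toMonoidHom ∘ FreeGroup.of)) := by rw [h2]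
        _ = ⇑A.subtype '' (⇑eA.toMonoidHom '' Set.range FreeGroup.of) := by
            rw [Set.range_comp, Set.range_comp]
    rw [h1, ← MonoidHom.map_closure, ← MonoidHom.map_closure, FreeGroup.closure_range_of,
      Subgroup.map_top_of_surjective _ eA.surjective]
    rw [← MonoidHom.range_eq_map, Subgroup.subtype_range]
  have hA₀B₀ : A₀ ≤ B.comap Φ.toMonoidHom := by
    rw [← Subgroup.map_le_iff_le_comap, hmapA]
    exact hAB
  have h0 := schreier_isFreeFactor_subgroupOf (B.comap Φ.toMonoidHom)
    (Set.range (Sum.inl : S → S ⊕ T)) hA₀B₀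
  have hmapB : Subgroup.map Φ.toMonoidHom (B.comap Φ.toMonoidHom) = B :=
    Subgroup.map_comap_eq_self_of_surjective Φ.surjective B
  let ΦB : ↥(B.comap Φ.toMonoidHom) ≃* ↥B :=
    ((B.comap Φ.toMonoidHom).equivMapOfInjective Φ.toMonoidHom Φ.injective).trans
      (MulEquiv.subgroupCongr hmapB)
  have h1 := h0.map ΦB
  convert h1 using 1
  symm
  apply Subgroup.map_injective (Subgroup.subtype_injective B)
  rw [Subgroup.subgroupOf_map_subtype, inf_eq_left.mpr hAB]
  rw [Subgroup.map_map]
  have hcomp : B.subtype.comp ΦB.toMonoidHom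
      = Φ.toMonoidHom.comp (B.comap Φ.toMonoidHom).subtype := by
    ext b
    simp [ΦB, Subgroup.coe_equivMapOfInjective_apply]
    rfl
  rw [hcomp, ← Subgroup.map_map, Subgroup.subgroupOf_map_subtype, inf_eq_left.mpr hA₀B₀, hmapA]
end

section
/- Let C be a free group and let A ≤ B ≤ C be subgroups with A and B both free factors of C. Suppose the quotient groups C/⟨⟨B⟩⟩ and B/⟨⟨A⟩⟩_B are finitely generated, where ⟨⟨·⟩⟩ denotes normal closure (in C, respectively in B). Then C/⟨⟨A⟩⟩ is finitely generated and cork(C,A) = cork(C,B) + cork(B,A), i.e., rank(C/⟨⟨A⟩⟩) = rank(C/⟨⟨B⟩⟩) + rank(B/⟨⟨A⟩⟩_B). -/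
open Monoid

open Monoid Subgroup

section FF

variable {G : Type*} [Group G]

private theorem ff_apply {A P : Subgroup G}
    (h : Function.Bijective ⇑(Coprod.lift A.subtype P.subtype)) (x : Coprod A P) :
    (MulEquiv.ofBijective _ h) x = Coprod.lift A.subtype P.subtype x := rfl

private theorem ff_symm_inl {A P : Subgroup G}
    (h : Function.Bijective ⇑(Coprod.lift A.subtype P.subtype)) (a : A) :
    (MulEquiv.ofBijective _ h).symm (a : G) = Coprod.inl a := by
  apply (MulEquiv.ofBijective _ h).injective
  rw [MulEquiv.apply_symm_apply, ff_apply h]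
  exact (Coprod.lift_apply_inl A.subtype P.subtype a).symm

private theorem ff_symm_inr {A P : Subgroup G}
    (h : Function.Bijective ⇑(Coprod.lift A.subtype P.subtype)) (p : P) :
    (MulEquiv.ofBijective _ h).symm (p : G) = Coprod.inr p := by
  apply (MulEquiv.ofBijective _ h).injective
  rw [MulEquiv.apply_symm_apply, ff_apply h]
  exact (Coprod.lift_apply_inr A.subtype P.subtype p).symm

/-- The retraction `G →* A` associated to a free factor decomposition. -/
private noncomputable def ffRetract {A P : Subgroup G}
    (h : Function.Bijective ⇑(Coprod.lift A.subtype P.subtype)) : G →* A :=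
  (Coprod.lift (MonoidHom.id A) (1 : P →* A)).comp (MulEquiv.ofBijective _ h).symm.toMonoidHom

private theorem ffRetract_coe {A P : Subgroup G}
    (h : Function.Bijective ⇑(Coprod.lift A.subtype P.subtype)) (a : A) :
    ffRetract h (a : G) = a := by
  simp only [ffRetract, MonoidHom.comp_apply, MulEquiv.coe_toMonoidHom, ff_symm_inl h a]
  exact Coprod.lift_apply_inl _ _ a

/-- The auxiliary projection `G →* P` killing the free factor `A`. -/
private noncomputable def ffProj {A P : Subgroup G}
    (h : Function.Bijective ⇑(Coprod.lift A.subtype P.subtype)) : G →* P :=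
  (Coprod.lift (1 : A →* P) (MonoidHom.id P)).comp (MulEquiv.ofBijective _ h).symm.toMonoidHom

private theorem ffProj_coe_left {A P : Subgroup G}
    (h : Function.Bijective ⇑(Coprod.lift A.subtype P.subtype)) (a : A) :
    ffProj h (a : G) = 1 := by
  simp only [ffProj, MonoidHom.comp_apply, MulEquiv.coe_toMonoidHom, ff_symm_inl h a]
  exact Coprod.lift_apply_inl _ _ a

private theorem ffProj_coe_right {A P : Subgroup G}
    (h : Function.Bijective ⇑(Coprod.lift A.subtype P.subtype)) (p : P) :
    ffProj h (p : G) = p := by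
  simp only [ffProj, MonoidHom.comp_apply, MulEquiv.coe_toMonoidHom, ff_symm_inr h p]
  exact Coprod.lift_apply_inr _ _ p

private theorem ffProj_ker {A P : Subgroup G}
    (h : Function.Bijective ⇑(Coprod.lift A.subtype P.subtype)) :
    Subgroup.normalClosure (A : Set G) ≤ (ffProj h).ker := by
  apply Subgroup.normalClosure_le_normal
  rintro x hx
  have := ffProj_coe_left h ⟨x, hx⟩
  simpa [MonoidHom.mem_ker] using this

/-- The quotient by the normal closure of a free factor is isomorphic to the complement. -/
private noncomputable def ffEquiv {A P : Subgroup G}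
    (h : Function.Bijective ⇑(Coprod.lift A.subtype P.subtype)) :
    (G ⧸ Subgroup.normalClosure (A : Set G)) ≃* P := by
  set kbar : (G ⧸ Subgroup.normalClosure (A : Set G)) →* P :=
    QuotientGroup.lift _ (ffProj h) (ffProj_ker h) with hkbar
  set j : P →* (G ⧸ Subgroup.normalClosure (A : Set G)) :=
    (QuotientGroup.mk' _).comp P.subtype with hj
  have hjk : ∀ x : G, j (ffProj h x) = QuotientGroup.mk x := by
    intro x
    obtain ⟨w, rfl⟩ := (MulEquiv.ofBijective _ h).surjective x
    induction w using Coprod.induction_on with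
    | inl a =>
      rw [ff_apply h, Coprod.lift_apply_inl]
      show j ((ffProj h) ((a : G))) = QuotientGroup.mk ((a : G))
      rw [ffProj_coe_left h a, map_one]
      exact ((QuotientGroup.eq_one_iff _).mpr (Subgroup.subset_normalClosure a.2)).symm
    | inr p =>
      rw [ff_apply h, Coprod.lift_apply_inr]
      show j ((ffProj h) ((p : G))) = QuotientGroup.mk ((p : G))
      rw [ffProj_coe_right h p]
      rfl
    | mul x y hx hy =>
      rw [map_mul, map_mul, map_mul, hx, hy]
      rfl
  refine MonoidHom.toMulEquiv kbar j ?_ ?_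
  · apply QuotientGroup.monoidHom_ext
    ext x
    exact hjk x
  · ext p
    show ((kbar (QuotientGroup.mk ((p : G)))) : G) = (p : G)
    rw [show kbar (QuotientGroup.mk ((p : G))) = ffProj h ((p : G)) from rfl,
      ffProj_coe_right h p]

private theorem ffEquiv_mk {A P : Subgroup G}
    (h : Function.Bijective ⇑(Coprod.lift A.subtype P.subtype)) (x : G) :
    ffEquiv h (QuotientGroup.mk x) = ffProj h x := rfl

end FF

section Dual

private theorem dual_inj {G : Type*} [Group G] {S : Finset G}
    (hS : Subgroup.closure (S : Set G) = ⊤) :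
    Function.Injective
      (fun (f : G →* Multiplicative (ZMod 2)) (s : S) => f (s : G)) := by
  intro f g hfg
  refine MonoidHom.eq_of_eqOn_dense hS ?_
  intro s hs
  exact congrFun hfg ⟨s, hs⟩

private theorem dual_finite (G : Type*) [Group G] [hFG : Group.FG G] :
    Finite (G →* Multiplicative (ZMod 2)) := by
  obtain ⟨S, -, hS⟩ := Group.rank_spec G
  exact Finite.of_injective _ (dual_inj hS)

private theorem dual_card_le (G : Type*) [Group G] [hFG : Group.FG G] :
    Nat.card (G →* Multiplicative (ZMod 2)) ≤ 2 ^ Group.rank G := by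
  obtain ⟨S, hcard, hS⟩ := Group.rank_spec G
  calc Nat.card (G →* Multiplicative (ZMod 2))
      ≤ Nat.card (S → Multiplicative (ZMod 2)) :=
        Nat.card_le_card_of_injective _ (dual_inj hS)
    _ = 2 ^ S.card := by
        rw [Nat.card_fun]
        congr 1
        · rw [Nat.card_eq_fintype_card]
          rfl
        · simp [Nat.card_eq_fintype_card]
    _ = 2 ^ Group.rank G := by rw [hcard]

private theorem generators_finite (G : Type*) [Group G] [IsFreeGroup G]
    (hfin : Finite (G →* Multiplicative (ZMod 2))) :
    Finite (IsFreeGroup.Generators G) := by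
  classical
  haveI : Finite (IsFreeGroup.Generators G → Multiplicative (ZMod 2)) :=
    Finite.of_equiv _ (IsFreeGroup.lift (H := Multiplicative (ZMod 2))).symm
  refine Finite.of_injective
    (fun (a : IsFreeGroup.Generators G) =>
      (fun b => if b = a then Multiplicative.ofAdd (1 : ZMod 2) else 1)) ?_
  intro a₁ a₂ h
  have h1 := congrFun h a₁
  simp only [if_pos rfl] at h1
  by_contra hne
  rw [if_neg (fun he : a₁ = a₂ => hne he)] at h1
  exact absurd h1 (by decide)

private theorem free_card (G : Type*) [Group G] [IsFreeGroup G]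
    (hfin : Finite (G →* Multiplicative (ZMod 2))) :
    ∃ hFG : Group.FG G,
      Nat.card (G →* Multiplicative (ZMod 2)) = 2 ^ @Group.rank G _ hFG := by
  classical
  haveI := generators_finite G hfin
  haveI : Fintype (IsFreeGroup.Generators G) := Fintype.ofFinite _
  -- the generators generate
  have htop : Subgroup.closure (Set.range (IsFreeGroup.of : IsFreeGroup.Generators G → G)) = ⊤ := by
    have h1 : Set.range (IsFreeGroup.of : IsFreeGroup.Generators G → G)
        = (IsFreeGroup.mulEquiv G).toMonoidHom ''
          (Set.range (FreeGroup.of : IsFreeGroup.Generators G → FreeGroup (IsFreeGroup.Generators G))) := by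
      rw [← Set.range_comp]
      rfl
    rw [h1, ← MonoidHom.map_closure, FreeGroup.closure_range_of,
      Subgroup.map_top_of_surjective _ (IsFreeGroup.mulEquiv G).surjective]
  have hFG : Group.FG G :=
    Group.fg_iff.mpr ⟨_, htop, Set.finite_range _⟩
  refine ⟨hFG, ?_⟩
  -- card of the dual
  have hcards : Nat.card (G →* Multiplicative (ZMod 2))
      = 2 ^ Fintype.card (IsFreeGroup.Generators G) := by
    rw [Nat.card_congr (IsFreeGroup.lift (G := G) (H := Multiplicative (ZMod 2))).symm,
      Nat.card_fun]
    congr 1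
    · rw [Nat.card_eq_fintype_card]
      rfl
    · rw [Nat.card_eq_fintype_card]
  -- rank is the number of generators
  have hrank : @Group.rank G _ hFG = Fintype.card (IsFreeGroup.Generators G) := by
    apply le_antisymm
    · -- rank ≤ #generators
      have hS : Subgroup.closure
          ((Finset.univ.image (IsFreeGroup.of : IsFreeGroup.Generators G → G) : Finset G) : Set G)
          = ⊤ := by
        rwa [Finset.coe_image, Finset.coe_univ, Set.image_univ]
      exact le_trans (@Group.rank_le G _ hFG _ hS)
        (le_trans (Finset.card_image_le) (le_of_eq (Finset.card_univ)))
    · -- #generators ≤ rank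
      have hle := @dual_card_le G _ hFG
      rw [hcards] at hle
      exact (Nat.pow_le_pow_iff_right (le_refl 2)).mp hle
  rw [hcards, hrank]

end Dual

/-- Additivity of corank: if `A ≤ B ≤ C` with `A, B` free factors of the free group `C`,
and the coranks `cork(C,B)` and `cork(B,A)` are defined (i.e. the corresponding
quotients by normal closures are finitely generated), then `cork(C,A)` is defined and
`cork(C,A) = cork(C,B) + cork(B,A)`, where `cork(B,A) = rank (B/⟨⟨A⟩⟩_B)`. -/

theorem corank_additive {C : Type*} [Group C] [IsFreeGroup C]
    (A B : Subgroup C) (hAB : A ≤ B)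
    (hA : IsFreeFactor A) (hB : IsFreeFactor B)
    (hCB : Group.FG (C ⧸ Subgroup.normalClosure (B : Set C)))
    (hBA : Group.FG (↥B ⧸ Subgroup.normalClosure ((A.subgroupOf B : Subgroup B) : Set B))) :
    ∃ hCA : Group.FG (C ⧸ Subgroup.normalClosure (A : Set C)),
      @Group.rank _ _ hCA = @Group.rank _ _ hCB + @Group.rank _ _ hBA := by
  classical
  obtain ⟨PA, hPA⟩ := hA
  obtain ⟨PB, hPB⟩ := hB
  -- Abbreviations
  let NA := Subgroup.normalClosure (A : Set C)
  let NB := Subgroup.normalClosure (B : Set C)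
  let N' := Subgroup.normalClosure ((A.subgroupOf B : Subgroup B) : Set B)
  -- The quotients by the normal closures of the free factors are free groups
  haveI freeQA : IsFreeGroup (C ⧸ NA) := IsFreeGroup.ofMulEquiv (ffEquiv hPA).symm
  haveI freeQB : IsFreeGroup (C ⧸ NB) := IsFreeGroup.ofMulEquiv (ffEquiv hPB).symm
  -- The retraction of C onto B
  let ρ : C →* B := ffRetract hPB
  have hρ : ∀ b : B, ρ (b : C) = b := fun b => ffRetract_coe hPB b
  -- The natural projection π : C⧸NA → C⧸NB
  have hπker : NA ≤ (QuotientGroup.mk' NB).ker := by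
    rw [QuotientGroup.ker_mk']
    exact Subgroup.normalClosure_le_normal
      (fun x hx => Subgroup.subset_normalClosure (hAB hx))
  let π : (C ⧸ NA) →* (C ⧸ NB) := QuotientGroup.lift NA (QuotientGroup.mk' NB) hπker
  have hπmk : ∀ x : C, π (QuotientGroup.mk x) = QuotientGroup.mk x := fun x => rfl
  -- The map ι : B⧸N' → C⧸NA induced by the inclusion
  have hιker : N' ≤ ((QuotientGroup.mk' NA).comp B.subtype).ker := by
    apply Subgroup.normalClosure_le_normal
    intro x hx
    have hxA : (x : C) ∈ A := hx
    simp only [SetLike.mem_coe, MonoidHom.mem_ker, MonoidHom.comp_apply,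
      QuotientGroup.mk'_apply]
    exact (QuotientGroup.eq_one_iff _).mpr (Subgroup.subset_normalClosure hxA)
  let ι : (B ⧸ N') →* (C ⧸ NA) :=
    QuotientGroup.lift N' ((QuotientGroup.mk' NA).comp B.subtype) hιker
  have hιmk : ∀ b : B, ι (QuotientGroup.mk b) = QuotientGroup.mk (b : C) := fun b => rfl
  -- The retraction ρbar : C⧸NA → B⧸N'
  have hρbarker : NA ≤ ((QuotientGroup.mk' N').comp ρ).ker := by
    apply Subgroup.normalClosure_le_normal
    intro x hx
    have h1 : ρ x = ⟨x, hAB hx⟩ := hρ ⟨x, hAB hx⟩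
    simp only [SetLike.mem_coe, MonoidHom.mem_ker, MonoidHom.comp_apply,
      QuotientGroup.mk'_apply, h1]
    exact (QuotientGroup.eq_one_iff _).mpr
      (Subgroup.subset_normalClosure (Subgroup.mem_subgroupOf.mpr hx))
  let ρbar : (C ⧸ NA) →* (B ⧸ N') :=
    QuotientGroup.lift NA ((QuotientGroup.mk' N').comp ρ) hρbarker
  have hρbarmk : ∀ x : C, ρbar (QuotientGroup.mk x) = QuotientGroup.mk (ρ x) := fun x => rfl
  -- Key identities
  have hπι : ∀ y, π (ι y) = 1 := by
    intro y
    induction y using QuotientGroup.induction_on with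
    | H b =>
      rw [hιmk b, hπmk]
      exact (QuotientGroup.eq_one_iff _).mpr (Subgroup.subset_normalClosure b.2)
  have hρι : ∀ y, ρbar (ι y) = y := by
    intro y
    induction y using QuotientGroup.induction_on with
    | H b =>
      rw [hιmk b, hρbarmk, hρ b]
  -- The splitting of the dual groups
  let w : ((C ⧸ NA) →* Multiplicative (ZMod 2)) → (C →* Multiplicative (ZMod 2)) :=
    fun f => (f.comp (QuotientGroup.mk' NA)) *
      (f.comp (ι.comp ((QuotientGroup.mk' N').comp ρ)))⁻¹
  have hw : ∀ f, NB ≤ (w f).ker := by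
    intro f
    apply Subgroup.normalClosure_le_normal
    intro x hx
    have h1 : ρ x = ⟨x, hx⟩ := hρ ⟨x, hx⟩
    simp only [SetLike.mem_coe, MonoidHom.mem_ker, w, MonoidHom.mul_apply,
      MonoidHom.inv_apply, MonoidHom.comp_apply, QuotientGroup.mk'_apply, h1,
      hιmk ⟨x, hx⟩]
    exact mul_inv_cancel _
  have hwmk : ∀ f x, w f x
      = f (QuotientGroup.mk x) * (f (ι (QuotientGroup.mk (ρ x))))⁻¹ := fun f x => rfl
  let Φ : (((C ⧸ NB) →* Multiplicative (ZMod 2)) × ((B ⧸ N') →* Multiplicative (ZMod 2)))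
      ≃ ((C ⧸ NA) →* Multiplicative (ZMod 2)) :=
    { toFun := fun p => (p.1.comp π) * (p.2.comp ρbar)
      invFun := fun f => (QuotientGroup.lift NB (w f) (hw f), f.comp ι)
      left_inv := by
        rintro ⟨u, v⟩
        have hF : ∀ x : C,
            ((u.comp π) * (v.comp ρbar)) (QuotientGroup.mk x)
              = u (QuotientGroup.mk x) * v (QuotientGroup.mk (ρ x)) := by
          intro x
          simp only [MonoidHom.mul_apply, MonoidHom.comp_apply, hπmk, hρbarmk]
        refine Prod.ext ?_ ?_
        · apply QuotientGroup.monoidHom_ext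
          ext x
          simp only [MonoidHom.comp_apply, QuotientGroup.mk'_apply]
          rw [show (QuotientGroup.lift NB (w ((u.comp π) * (v.comp ρbar)))
              (hw _)) (QuotientGroup.mk x) = w ((u.comp π) * (v.comp ρbar)) x from rfl]
          rw [hwmk, hF x]
          have h2 : ((u.comp π) * (v.comp ρbar)) (ι (QuotientGroup.mk (ρ x)))
              = v (QuotientGroup.mk (ρ x)) := by
            simp only [MonoidHom.mul_apply, MonoidHom.comp_apply, hπι, hρι, map_one, one_mul]
          rw [h2, mul_inv_cancel_right]
        · apply QuotientGroup.monoidHom_ext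
          ext b
          simp only [MonoidHom.comp_apply, QuotientGroup.mk'_apply]
          rw [hιmk b, hF (b : C)]
          have h3 : (QuotientGroup.mk ((b : B) : C) : C ⧸ NB) = 1 :=
            (QuotientGroup.eq_one_iff _).mpr (Subgroup.subset_normalClosure b.2)
          rw [h3, map_one, hρ b, one_mul]
      right_inv := by
        intro f
        apply QuotientGroup.monoidHom_ext
        ext x
        simp only [MonoidHom.mul_apply, MonoidHom.comp_apply, QuotientGroup.mk'_apply,
          hπmk, hρbarmk]
        rw [show (QuotientGroup.lift NB (w f) (hw f)) (QuotientGroup.mk x) = w f x from rfl,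
          hwmk, inv_mul_cancel_right] }
  -- Finiteness of the dual groups
  haveI fin2 : Finite ((C ⧸ NB) →* Multiplicative (ZMod 2)) := @dual_finite _ _ hCB
  haveI fin3 : Finite ((B ⧸ N') →* Multiplicative (ZMod 2)) := @dual_finite _ _ hBA
  haveI fin1 : Finite ((C ⧸ NA) →* Multiplicative (ZMod 2)) := Finite.of_equiv _ Φ
  -- B⧸N' is a free group (as a retract of the free group C⧸NA)
  have hinjι : Function.Injective ι := by
    intro y₁ y₂ h
    rw [← hρι y₁, ← hρι y₂, h]
  haveI freeQ3 : IsFreeGroup (B ⧸ N') :=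
    IsFreeGroup.ofMulEquiv (MonoidHom.ofInjective hinjι).symm
  -- Cardinality computations
  obtain ⟨hFG1, hc1⟩ := free_card (C ⧸ NA) fin1
  obtain ⟨hFG2, hc2⟩ := free_card (C ⧸ NB) fin2
  obtain ⟨hFG3, hc3⟩ := free_card (B ⧸ N') fin3
  refine ⟨hFG1, ?_⟩
  have hΦcard : Nat.card ((C ⧸ NA) →* Multiplicative (ZMod 2))
      = Nat.card ((C ⧸ NB) →* Multiplicative (ZMod 2))
        * Nat.card ((B ⧸ N') →* Multiplicative (ZMod 2)) := by
    rw [← Nat.card_prod]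
    exact (Nat.card_congr Φ).symm
  rw [hc1, hc2, hc3, ← pow_add] at hΦcard
  have hsum := Nat.pow_right_injective (le_refl 2) hΦcard
  exact hsum
end

section
/- Let X be a topological space, x ∈ X, and let f, g : X → X be continuous maps with f(x) = x and g(x) = x. Let H be a homotopy from f to g, and let α be the loop at x defined by α(t) = H(t, x). Suppose that the endomorphisms of the fundamental group π₁(X,x) induced by f and by g coincide, that this common endomorphism is surjective, and that the center of π₁(X,x) is trivial. Then α is nullhomotopic, i.e., homotopic rel endpoints to the constant loop at x. -/
open unitInterval

section Aux

open CategoryTheory FundamentalGroupoid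
open scoped FundamentalGroupoid

attribute [local instance] Path.Homotopic.setoid

private lemma homotopic_cast_aux {X : Type*} [TopologicalSpace X] {a b a' b' : X}
    {p q : Path a b} (h : p.Homotopic q) (ha : a' = a) (hb : b' = b) :
    (p.cast ha hb).Homotopic (q.cast ha hb) := by
  subst ha; subst hb; exact h

private lemma cast_trans_aux {X : Type*} [TopologicalSpace X] {a b c a' b' c' : X}
    (p : Path a b) (q : Path b c) (ha : a' = a) (hb : b' = b) (hc : c' = c) :
    ((p.trans q).cast ha hc) = (p.cast ha hb).trans (q.cast hb hc) := by
  ext t; simp [Path.trans_apply, Path.cast]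

private lemma conj_aux {Y : TopCat} {f g : C(Y, Y)} (H : ContinuousMap.Homotopy f g) (x : Y)
    (γ : Path x x) :
    ((γ.map f.continuous).trans (H.evalAt x)).Homotopic
      ((H.evalAt x).trans (γ.map g.continuous)) := by
  have h := (H.eq_diag_path (⟦γ⟧ : fromTop x ⟶ fromTop x)).1.trans
    (H.eq_diag_path (⟦γ⟧ : fromTop x ⟶ fromTop x)).2.symm
  exact Quotient.exact (s := Path.Homotopic.setoid _ _)
    (a := (γ.map f.continuous).trans (H.evalAt x)) (b := (H.evalAt x).trans (γ.map g.continuous)) h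

end Aux

/-- Suppose `f, g : X → X` fix `x`, `H` is a homotopy from `f` to `g`, and
`α` is the loop `t ↦ H(t, x)` at `x`.  If `f` and `g` induce the same endomorphism
of `π₁(X, x)` (i.e. `[f ∘ γ] = [g ∘ γ]` for every loop `γ` at `x`), this common
endomorphism is surjective on `π₁(X, x)`, and the center of `π₁(X, x)` is trivial,
then `α` is nullhomotopic (homotopic rel endpoints to the constant loop at `x`). -/
theorem loop_of_homotopy_nullhomotopic {X : Type*} [TopologicalSpace X] (x : X)
    (f g : C(X, X)) (hf : f x = x) (hg : g x = x)
    (H : ContinuousMap.Homotopy f g)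
    (α : Path x x) (hα : ∀ t : I, α t = H (t, x))
    (hsame : ∀ γ : Path x x,
      Path.Homotopic ((γ.map f.continuous).cast hf.symm hf.symm)
        ((γ.map g.continuous).cast hg.symm hg.symm))
    (hsurj : ∀ γ : Path x x, ∃ δ : Path x x,
      Path.Homotopic ((δ.map f.continuous).cast hf.symm hf.symm) γ)
    (hcenter : ∀ γ : Path x x,
      (∀ δ : Path x x, Path.Homotopic (γ.trans δ) (δ.trans γ)) →
      Path.Homotopic γ (Path.refl x)) :
    Path.Homotopic α (Path.refl x) := by
  have hαe : α = (H.evalAt x).cast hf.symm hg.symm := by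
    ext t; exact hα t
  have conj : ∀ γ : Path x x,
      (((γ.map f.continuous).cast hf.symm hf.symm).trans α).Homotopic
        (α.trans ((γ.map g.continuous).cast hg.symm hg.symm)) := by
    intro γ
    have key := conj_aux (Y := TopCat.of X) (f := f) (g := g) H x γ
    have key2 := homotopic_cast_aux key hf.symm hg.symm
    rw [cast_trans_aux _ _ hf.symm hf.symm hg.symm,
        cast_trans_aux _ _ hf.symm hg.symm hg.symm] at key2
    rw [hαe]
    exact key2
  apply hcenter
  intro δ
  obtain ⟨γ, hγ⟩ := hsurj δ
  have h1 : (α.trans δ).Homotopic (α.trans ((γ.map g.continuous).cast hg.symm hg.symm)) :=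
    (Path.Homotopic.refl α).hcomp (hγ.symm.trans (hsame γ))
  have h2 : (((γ.map f.continuous).cast hf.symm hf.symm).trans α).Homotopic (δ.trans α) :=
    hγ.hcomp (Path.Homotopic.refl α)
  exact h1.trans ((conj γ).symm.trans h2)
end

section
/- Let G be a separable, metrizable topological group that is locally coarsely bounded (some neighborhood of the identity is coarsely bounded in G) and has arbitrarily small open subgroups (every neighborhood of the identity contains an open subgroup). Then G admits a pseudo-metric d : G × G → ℝ that is continuous, left-invariant (d(kg, kh) = d(g,h) for all g,h,k ∈ G), and coarsely proper, meaning that for every g ∈ G and R ≥ 0 the ball {h ∈ G : d(g,h) ≤ R} is coarsely bounded in G. -/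
open Pointwise

/-- A subset `A` of a topological group `G` is *coarsely bounded in `G`* if for every
neighborhood `V` of the identity there are a finite set `F ⊆ G` and an `n ≥ 1` with
`A ⊆ (F·V)ⁿ`. -/
def IsCBIn (G : Type*) [Group G] [TopologicalSpace G] (A : Set G) : Prop :=
  ∀ V ∈ nhds (1 : G), ∃ F : Set G, F.Finite ∧ ∃ n : ℕ, 1 ≤ n ∧ A ⊆ (F * V) ^ n

section CB
variable {G : Type*} [Group G] [TopologicalSpace G]

lemma isCBIn_mono {A B : Set G} (hB : IsCBIn G B) (hAB : A ⊆ B) : IsCBIn G A := by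
  intro V hV
  obtain ⟨F, hF, n, hn, hsub⟩ := hB V hV
  exact ⟨F, hF, n, hn, hAB.trans hsub⟩

lemma isCBIn_finite {A : Set G} (hA : A.Finite) : IsCBIn G A := by
  intro V hV
  refine ⟨A, hA, 1, le_refl _, ?_⟩
  rw [pow_one]
  intro a ha
  exact ⟨a, ha, 1, mem_of_mem_nhds hV, mul_one a⟩

lemma isCBIn_mul {A B : Set G} (hA : IsCBIn G A) (hB : IsCBIn G B) : IsCBIn G (A * B) := by
  intro V hV
  obtain ⟨F₁, hF₁, n₁, hn₁, h₁⟩ := hA V hV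
  obtain ⟨F₂, hF₂, n₂, hn₂, h₂⟩ := hB V hV
  refine ⟨F₁ ∪ F₂, hF₁.union hF₂, n₁ + n₂, le_trans hn₁ (Nat.le_add_right _ _), ?_⟩
  have k₁ : (F₁ * V) ^ n₁ ⊆ ((F₁ ∪ F₂) * V) ^ n₁ :=
    Set.pow_subset_pow_left (Set.mul_subset_mul_right Set.subset_union_left)
  have k₂ : (F₂ * V) ^ n₂ ⊆ ((F₁ ∪ F₂) * V) ^ n₂ :=
    Set.pow_subset_pow_left (Set.mul_subset_mul_right Set.subset_union_right)
  calc A * B ⊆ ((F₁ ∪ F₂) * V) ^ n₁ * ((F₁ ∪ F₂) * V) ^ n₂ :=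
        Set.mul_subset_mul (h₁.trans k₁) (h₂.trans k₂)
    _ = ((F₁ ∪ F₂) * V) ^ (n₁ + n₂) := (pow_add _ _ _).symm

lemma isCBIn_pow {A : Set G} (hA : IsCBIn G A) (n : ℕ) : IsCBIn G (A ^ n) := by
  induction n with
  | zero => rw [pow_zero]; exact isCBIn_finite Set.finite_one
  | succ k ih => rw [pow_succ]; exact isCBIn_mul ih hA

end CB

theorem aux_pseudometric (G : Type*) [Group G] [TopologicalSpace G] [IsTopologicalGroup G]
    (H : Subgroup G) (hHo : IsOpen (H : Set G)) (hHcb : IsCBIn G (H : Set G))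
    (x : ℕ → G) (hx : ∀ g : G, ∃ n : ℕ, ∃ h ∈ H, g = x n * h) :
    ∃ d : G → G → ℝ,
      (∀ g, d g g = 0) ∧
      (∀ g h, 0 ≤ d g h) ∧
      (∀ g h, d g h = d h g) ∧
      (∀ g h k, d g k ≤ d g h + d h k) ∧
      Continuous (Function.uncurry d) ∧
      (∀ k g h, d (k * g) (k * h) = d g h) ∧
      (∀ (g : G) (R : ℝ), 0 ≤ R → IsCBIn G {h | d g h ≤ R}) := by
  classical
  -- the set of weighted generators
  set T : Set (G × ℝ) :=
    {p | (p.1 ∈ H ∧ p.2 = 0) ∨ ∃ n : ℕ, (p.1 = x n ∨ p.1 = (x n)⁻¹) ∧ p.2 = (n : ℝ) + 1}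
    with hTdef
  -- costs of factorizations
  set C : G → Set ℝ := fun g =>
    {c | ∃ l : List (G × ℝ), (∀ p ∈ l, p ∈ T) ∧ (l.map Prod.fst).prod = g ∧
      (l.map Prod.snd).sum = c} with hCdef
  set ℓ : G → ℝ := fun g => sInf (C g) with hℓdef
  have hTpos : ∀ p ∈ T, 0 ≤ p.2 := by
    rintro p (⟨-, hp⟩ | ⟨n, -, hp⟩) <;> rw [hp] <;> positivity
  have hTinv : ∀ p ∈ T, ((p.1)⁻¹, p.2) ∈ T := by
    rintro p (⟨hp, hp2⟩ | ⟨n, hp | hp, hp2⟩)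
    · exact Or.inl ⟨H.inv_mem hp, hp2⟩
    · exact Or.inr ⟨n, Or.inr (by rw [hp]), hp2⟩
    · exact Or.inr ⟨n, Or.inl (by rw [hp, inv_inv]), hp2⟩
  have hsum_nonneg : ∀ l : List (G × ℝ), (∀ p ∈ l, p ∈ T) → 0 ≤ (l.map Prod.snd).sum := by
    intro l hl
    apply List.sum_nonneg
    intro r hr
    obtain ⟨p, hp, rfl⟩ := List.mem_map.mp hr
    exact hTpos p (hl p hp)
  have hCne : ∀ g, (C g).Nonempty := by
    intro g
    obtain ⟨n, h, hh, hg⟩ := hx g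
    refine ⟨(n : ℝ) + 1 + 0, [(x n, (n : ℝ) + 1), (h, 0)], ?_, ?_, ?_⟩
    · rintro p hp
      rcases List.mem_cons.mp hp with rfl | hp
      · exact Or.inr ⟨n, Or.inl rfl, rfl⟩
      · rcases List.mem_cons.mp hp with rfl | hp
        · exact Or.inl ⟨hh, rfl⟩
        · simp at hp
    · simp [hg]
    · simp
  have hCbdd : ∀ g, BddBelow (C g) := by
    intro g
    refine ⟨0, ?_⟩
    rintro c ⟨l, hl, -, rfl⟩
    exact hsum_nonneg l hl
  have hℓ_nonneg : ∀ g, 0 ≤ ℓ g := by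
    intro g
    apply Real.sInf_nonneg
    rintro c ⟨l, hl, -, rfl⟩
    exact hsum_nonneg l hl
  have hℓH : ∀ h ∈ H, ℓ h = 0 := by
    intro h hh
    refine le_antisymm ?_ (hℓ_nonneg h)
    apply csInf_le (hCbdd h)
    refine ⟨[(h, 0)], ?_, by simp, by simp⟩
    intro p hp
    rcases List.mem_cons.mp hp with rfl | hp
    · exact Or.inl ⟨hh, rfl⟩
    · simp at hp
  have hCadd : ∀ a b : G, ∀ c₁ ∈ C a, ∀ c₂ ∈ C b, c₁ + c₂ ∈ C (a * b) := by
    rintro a b c₁ ⟨l₁, hl₁, hp₁, hs₁⟩ c₂ ⟨l₂, hl₂, hp₂, hs₂⟩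
    refine ⟨l₁ ++ l₂, ?_, ?_, ?_⟩
    · intro p hp
      rcases List.mem_append.mp hp with hp | hp
      · exact hl₁ p hp
      · exact hl₂ p hp
    · rw [List.map_append, List.prod_append, hp₁, hp₂]
    · rw [List.map_append, List.sum_append, hs₁, hs₂]
  have hℓ_sub : ∀ a b : G, ℓ (a * b) ≤ ℓ a + ℓ b := by
    intro a b
    have h1 : ∀ c₁ ∈ C a, ℓ (a * b) - c₁ ≤ ℓ b := by
      intro c₁ hc₁
      apply le_csInf (hCne b)
      intro c₂ hc₂
      rw [sub_le_iff_le_add']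
      exact csInf_le (hCbdd _) (hCadd a b c₁ hc₁ c₂ hc₂)
    have h2 : ℓ (a * b) - ℓ b ≤ ℓ a := by
      apply le_csInf (hCne a)
      intro c₁ hc₁
      have := h1 c₁ hc₁
      linarith
    linarith
  have hℓ_inv_le : ∀ a : G, ℓ a⁻¹ ≤ ℓ a := by
    intro a
    have hsub : C a ⊆ C a⁻¹ := by
      rintro c ⟨l, hl, hp, hs⟩
      refine ⟨(l.map (fun p => ((p.1)⁻¹, p.2))).reverse, ?_, ?_, ?_⟩
      · intro p hp'
        rw [List.mem_reverse, List.mem_map] at hp'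
        obtain ⟨q, hq, rfl⟩ := hp'
        exact hTinv q (hl q hq)
      · rw [List.map_reverse, List.map_map]
        have : (Prod.fst ∘ fun p : G × ℝ => ((p.1)⁻¹, p.2)) = (fun y => y⁻¹) ∘ Prod.fst := rfl
        rw [this, ← List.map_map, ← List.prod_inv_reverse, hp]
      · rw [List.map_reverse, List.sum_reverse, List.map_map]
        have : (Prod.snd ∘ fun p : G × ℝ => ((p.1)⁻¹, p.2)) = Prod.snd := rfl
        rw [this, hs]
    exact csInf_le_csInf (hCbdd _) (hCne a) hsub
  have hℓ_inv : ∀ a : G, ℓ a⁻¹ = ℓ a := by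
    intro a
    refine le_antisymm (hℓ_inv_le a) ?_
    have := hℓ_inv_le a⁻¹
    rwa [inv_inv] at this
  have hℓ_right : ∀ a : G, ∀ h ∈ H, ℓ (a * h) = ℓ a := by
    intro a h hh
    refine le_antisymm ?_ ?_
    · have := hℓ_sub a h
      rw [hℓH h hh] at this
      linarith
    · have := hℓ_sub (a * h) h⁻¹
      rw [hℓH h⁻¹ (H.inv_mem hh), mul_assoc, mul_inv_cancel, mul_one] at this
      linarith
  have hℓ_left : ∀ a : G, ∀ h ∈ H, ℓ (h * a) = ℓ a := by
    intro a h hh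
    refine le_antisymm ?_ ?_
    · have := hℓ_sub h a
      rw [hℓH h hh] at this
      linarith
    · have := hℓ_sub h⁻¹ (h * a)
      rw [hℓH h⁻¹ (H.inv_mem hh), ← mul_assoc, inv_mul_cancel, one_mul] at this
      linarith
  -- the pseudometric
  refine ⟨fun g h => ℓ (g⁻¹ * h), ?_, ?_, ?_, ?_, ?_, ?_, ?_⟩
  · intro g
    show ℓ (g⁻¹ * g) = 0
    rw [inv_mul_cancel]
    exact hℓH 1 H.one_mem
  · intro g h
    exact hℓ_nonneg _
  · intro g h
    show ℓ (g⁻¹ * h) = ℓ (h⁻¹ * g)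
    rw [← hℓ_inv (g⁻¹ * h), mul_inv_rev, inv_inv]
  · intro g h k
    show ℓ (g⁻¹ * k) ≤ ℓ (g⁻¹ * h) + ℓ (h⁻¹ * k)
    have : g⁻¹ * k = (g⁻¹ * h) * (h⁻¹ * k) := by group
    rw [this]
    exact hℓ_sub _ _
  · -- continuity
    rw [continuous_iff_continuousAt]
    rintro ⟨g, h⟩
    apply Filter.EventuallyEq.continuousAt (y := ℓ (g⁻¹ * h))
    have hU : ((fun a => g * a) '' (H : Set G)) ×ˢ ((fun a => h * a) '' (H : Set G)) ∈
        nhds (g, h) := by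
      apply IsOpen.mem_nhds
      · exact (((Homeomorph.mulLeft g).isOpenMap _ hHo).prod
          ((Homeomorph.mulLeft h).isOpenMap _ hHo))
      · exact ⟨⟨1, H.one_mem, mul_one g⟩, ⟨1, H.one_mem, mul_one h⟩⟩
    filter_upwards [hU]
    rintro ⟨a, b⟩ ⟨⟨h₁, hh₁, rfl⟩, ⟨h₂, hh₂, rfl⟩⟩
    show ℓ ((g * h₁)⁻¹ * (h * h₂)) = ℓ (g⁻¹ * h)
    have heq : (g * h₁)⁻¹ * (h * h₂) = h₁⁻¹ * ((g⁻¹ * h) * h₂) := by group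
    rw [heq, hℓ_left _ _ (H.inv_mem hh₁), hℓ_right _ _ hh₂]
  · intro k g h
    show ℓ ((k * g)⁻¹ * (k * h)) = ℓ (g⁻¹ * h)
    have : (k * g)⁻¹ * (k * h) = g⁻¹ * h := by group
    rw [this]
  · -- coarse properness
    intro g R hR
    set N : ℕ := ⌈R⌉₊ with hNdef
    set F : Set G := insert 1 ((x '' {n | n ≤ N}) ∪ ((fun n => (x n)⁻¹) '' {n | n ≤ N}))
      with hFdef
    have hFfin : F.Finite := by
      apply Set.Finite.insert
      exact ((Set.finite_le_nat N).image x).union ((Set.finite_le_nat N).image _)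
    set SF : Set G := (H : Set G) * F with hSFdef
    have hSF1 : (1 : G) ∈ SF := ⟨1, H.one_mem, 1, Set.mem_insert 1 _, mul_one 1⟩
    have hHH : (H : Set G) * (H : Set G) ⊆ (H : Set G) := by
      rintro _ ⟨a, ha, b, hb, rfl⟩
      exact H.mul_mem ha hb
    have hHSF : ∀ m : ℕ, (H : Set G) * SF ^ (m + 1) ⊆ SF ^ (m + 1) := by
      intro m
      rw [pow_succ']
      calc (H : Set G) * (SF * SF ^ m) = (((H : Set G) * (H : Set G)) * F) * SF ^ m := by
            rw [hSFdef]; rw [← mul_assoc, ← mul_assoc]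
        _ ⊆ ((H : Set G) * F) * SF ^ m :=
            Set.mul_subset_mul_right (Set.mul_subset_mul_right hHH)
        _ = SF * SF ^ m := by rw [hSFdef]
    have key : ∀ l : List (G × ℝ), (∀ p ∈ l, p ∈ T) → (l.map Prod.snd).sum < R + 1 →
        ∃ k : ℕ, (k : ℝ) ≤ (l.map Prod.snd).sum ∧ (l.map Prod.fst).prod ∈ SF ^ (k + 1) := by
      intro l
      induction l with
      | nil =>
        intro _ _
        refine ⟨0, by simp, ?_⟩
        rw [pow_one]
        simpa using hSF1
      | cons p l ih =>
        intro hmem hsum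
        have hTl : ∀ q ∈ l, q ∈ T := fun q hq => hmem q (List.mem_cons_of_mem _ hq)
        have hpT : p ∈ T := hmem p List.mem_cons_self
        have hp2 : 0 ≤ p.2 := hTpos p hpT
        have htail : 0 ≤ (l.map Prod.snd).sum := hsum_nonneg l hTl
        have hsumc : p.2 + (l.map Prod.snd).sum < R + 1 := by
          simpa using hsum
        have hsum' : (l.map Prod.snd).sum < R + 1 := by linarith
        obtain ⟨k, hk, hkmem⟩ := ih hTl hsum'
        rcases hpT with ⟨hpH, hp0⟩ | ⟨n, hpx, hpc⟩
        · refine ⟨k, ?_, ?_⟩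
          · simp only [List.map_cons, List.sum_cons]
            linarith
          · simp only [List.map_cons, List.prod_cons]
            exact hHSF k (Set.mul_mem_mul hpH hkmem)
        · have hn1 : (n : ℝ) + 1 < R + 1 := by rw [← hpc]; linarith
          have hnN : n ≤ N := by
            have h1 : (n : ℝ) < R := by linarith
            have := Nat.lt_ceil.mpr h1
            omega
          have hpF : p.1 ∈ F := by
            rcases hpx with h' | h'
            · exact Set.mem_insert_of_mem _ (Or.inl ⟨n, hnN, h'.symm⟩)
            · exact Set.mem_insert_of_mem _ (Or.inr ⟨n, hnN, h'.symm⟩)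
          refine ⟨k + 1, ?_, ?_⟩
          · simp only [List.map_cons, List.sum_cons]
            push_cast
            have : (1 : ℝ) ≤ p.2 := by
              rw [hpc]; exact le_add_of_nonneg_left (Nat.cast_nonneg n)
            linarith
          · simp only [List.map_cons, List.prod_cons]
            have hmem1 : p.1 ∈ SF := ⟨1, H.one_mem, p.1, hpF, one_mul p.1⟩
            have := Set.mul_mem_mul hmem1 hkmem
            rwa [← pow_succ'] at this
    have hball : {y : G | ℓ y ≤ R} ⊆ SF ^ (N + 2) := by
      intro y hy
      have hy' : sInf (C y) < R + 1 := lt_of_le_of_lt hy (by linarith)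
      obtain ⟨c, hc, hlt⟩ := exists_lt_of_csInf_lt (hCne y) hy'
      obtain ⟨l, hlT, hlp, hls⟩ := hc
      have hls' : (l.map Prod.snd).sum < R + 1 := by rw [hls]; exact hlt
      obtain ⟨k, hk, hkm⟩ := key l hlT hls'
      have hkN : k + 1 ≤ N + 2 := by
        have h1 : (k : ℝ) < R + 1 := lt_of_le_of_lt hk hls'
        have h2 : R ≤ (N : ℝ) := by rw [hNdef]; exact Nat.le_ceil R
        have h3 : (k : ℝ) < (N : ℝ) + 1 := by linarith
        have : k < N + 1 := by exact_mod_cast h3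
        omega
      exact Set.pow_subset_pow_right hSF1 hkN (hlp ▸ hkm)
    have hSFcb : IsCBIn G (SF ^ (N + 2)) :=
      isCBIn_pow (isCBIn_mul hHcb (isCBIn_finite hFfin)) _
    have hballcb : IsCBIn G {y : G | ℓ y ≤ R} := isCBIn_mono hSFcb hball
    have heq : {h : G | ℓ (g⁻¹ * h) ≤ R} = {g} * {y : G | ℓ y ≤ R} := by
      ext h
      simp only [Set.mem_setOf_eq, Set.singleton_mul, Set.mem_image]
      constructor
      · intro hh
        exact ⟨g⁻¹ * h, hh, by group⟩
      · rintro ⟨y, hy, rfl⟩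
        simpa using hy
    show IsCBIn G {h : G | ℓ (g⁻¹ * h) ≤ R}
    rw [heq]
    exact isCBIn_mul (isCBIn_finite (Set.finite_singleton g)) hballcb


/-- A separable, metrizable, locally coarsely bounded topological group with
arbitrarily small open subgroups admits a continuous, left-invariant, coarsely
proper pseudo-metric. -/
theorem exists_coarsely_proper_pseudometric (G : Type*) [Group G] [TopologicalSpace G]
    [IsTopologicalGroup G] [TopologicalSpace.SeparableSpace G]
    [TopologicalSpace.MetrizableSpace G]
    (hlocCB : ∃ V ∈ nhds (1 : G), IsCBIn G V)
    (hsmall : ∀ V ∈ nhds (1 : G), ∃ H : Subgroup G, IsOpen (H : Set G) ∧ (H : Set G) ⊆ V) :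
    ∃ d : G → G → ℝ,
      (∀ g, d g g = 0) ∧
      (∀ g h, 0 ≤ d g h) ∧
      (∀ g h, d g h = d h g) ∧
      (∀ g h k, d g k ≤ d g h + d h k) ∧
      Continuous (Function.uncurry d) ∧
      (∀ k g h, d (k * g) (k * h) = d g h) ∧
      (∀ (g : G) (R : ℝ), 0 ≤ R → IsCBIn G {h | d g h ≤ R}) := by

  obtain ⟨V, hV, hVcb⟩ := hlocCB
  obtain ⟨H, hHo, hHV⟩ := hsmall V hV
  have hHcb : IsCBIn G (H : Set G) := isCBIn_mono hVcb hHV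
  haveI : Nonempty G := ⟨1⟩
  obtain ⟨D, hDc, hDd⟩ := TopologicalSpace.exists_countable_dense G
  obtain ⟨x, hxr⟩ := hDc.exists_eq_range hDd.nonempty
  have hxd : DenseRange x := by rw [DenseRange, ← hxr]; exact hDd
  have hx : ∀ g : G, ∃ n : ℕ, ∃ h ∈ H, g = x n * h := by
    intro g
    have hopen : IsOpen ((fun a => g * a) '' (H : Set G)) :=
      (Homeomorph.mulLeft g).isOpenMap _ hHo
    obtain ⟨n, hn⟩ := hxd.exists_mem_open hopen ⟨g, 1, H.one_mem, mul_one g⟩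
    obtain ⟨h, hh, hxe⟩ := hn
    exact ⟨n, h⁻¹, H.inv_mem hh, by rw [← hxe]; group⟩
  exact aux_pseudometric G H hHo hHcb x hx
end

section
/- Let G be a topological group and let d, d' be two continuous, left-invariant pseudo-metrics on G, with d coarsely proper (every d-ball {h : d(g,h) ≤ R} is coarsely bounded in G). Then the identity map (G,d) → (G,d') is coarsely Lipschitz: there exists a nondecreasing function Φ : [0,∞) → [0,∞) such that d'(g,h) ≤ Φ(d(g,h)) for all g, h ∈ G. -/
open Pointwise

/-- If `d, d'` are continuous left-invariant pseudo-metrics on a topological group `G`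
and `d` is coarsely proper, then the identity map `(G,d) → (G,d')` is coarsely
Lipschitz: there is a nondecreasing `Φ` with `d'(g,h) ≤ Φ(d(g,h))` for all `g, h`. -/
theorem coarselyLipschitz_of_coarselyProper {G : Type*} [Group G] [TopologicalSpace G]
    [IsTopologicalGroup G] (d d' : G → G → ℝ)
    (hd0 : ∀ g, d g g = 0) (hdnn : ∀ g h, 0 ≤ d g h)
    (hdsymm : ∀ g h, d g h = d h g) (hdtri : ∀ g h k, d g k ≤ d g h + d h k)
    (hd'0 : ∀ g, d' g g = 0) (hd'nn : ∀ g h, 0 ≤ d' g h)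
    (hd'symm : ∀ g h, d' g h = d' h g) (hd'tri : ∀ g h k, d' g k ≤ d' g h + d' h k)
    (hdcont : Continuous (Function.uncurry d))
    (hd'cont : Continuous (Function.uncurry d'))
    (hdinv : ∀ k g h, d (k * g) (k * h) = d g h)
    (hd'inv : ∀ k g h, d' (k * g) (k * h) = d' g h)
    (hproper : ∀ (g : G) (R : ℝ), IsCBIn G {h | d g h ≤ R}) :
    ∃ Φ : ℝ → ℝ, Monotone Φ ∧ ∀ g h, d' g h ≤ Φ (d g h) := by
  -- key: every d-ball around 1 is d'-bounded
  have key : ∀ R : ℝ, ∃ C : ℝ, ∀ h : G, d 1 h ≤ R → d' 1 h ≤ C := by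
    intro R
    -- V = {g | d' 1 g < 1} is an open neighborhood of 1
    have hcont1 : Continuous (fun g : G => d' 1 g) := by
      have : (fun g : G => d' 1 g) = Function.uncurry d' ∘ (fun g => ((1 : G), g)) := rfl
      rw [this]
      exact hd'cont.comp (by continuity)
    have hVopen : IsOpen {g : G | d' 1 g < 1} := isOpen_lt hcont1 continuous_const
    have hVnhds : {g : G | d' 1 g < 1} ∈ nhds (1 : G) :=
      hVopen.mem_nhds (by simp [hd'0])
    obtain ⟨F, hF, n, hn, hsub⟩ := hproper 1 R _ hVnhds
    obtain ⟨C0, hC0⟩ : BddAbove ((fun f => d' 1 f) '' F) := (hF.image _).bddAbove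
    -- every element of F * V has d'-norm ≤ C0 + 1
    have hFV : ∀ x ∈ F * {g : G | d' 1 g < 1}, d' 1 x ≤ C0 + 1 := by
      rintro x ⟨f, hf, v, hv, rfl⟩
      have h1 : d' 1 (f * v) ≤ d' 1 f + d' f (f * v) := hd'tri _ _ _
      have h2 : d' f (f * v) = d' 1 v := by
        have := hd'inv f 1 v; simpa using this
      have h3 : d' 1 f ≤ C0 := hC0 ⟨f, hf, rfl⟩
      have h4 : d' 1 v < 1 := hv
      linarith
    -- by induction, elements of (F*V)^m have d'-norm ≤ m*(C0+1)
    have hpow : ∀ m : ℕ, ∀ x ∈ (F * {g : G | d' 1 g < 1}) ^ m,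
        d' 1 x ≤ (m : ℝ) * (C0 + 1) := by
      intro m
      induction m with
      | zero => intro x hx; simp only [pow_zero, Set.mem_one] at hx; simp [hx, hd'0]
      | succ k ih =>
        intro x hx
        rw [pow_succ] at hx
        rcases hx with ⟨a, ha, b, hb, rfl⟩
        have h1 : d' 1 (a * b) ≤ d' 1 a + d' a (a * b) := hd'tri _ _ _
        have h2 : d' a (a * b) = d' 1 b := by
          have := hd'inv a 1 b; simpa using this
        have h3 := ih a ha
        have h4 := hFV b hb
        push_cast
        linarith
    exact ⟨(n : ℝ) * (C0 + 1), fun h hh => hpow n h (hsub hh)⟩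
  -- define Φ R as the sup of d'-norms on the d-ball of radius R
  set Φ : ℝ → ℝ := fun R => sSup (insert 0 ((fun h => d' 1 h) '' {h : G | d 1 h ≤ R}))
    with hΦ
  have hbdd : ∀ R, BddAbove (insert 0 ((fun h => d' 1 h) '' {h : G | d 1 h ≤ R})) := by
    intro R
    obtain ⟨C, hC⟩ := key R
    refine ⟨max C 0, ?_⟩
    rintro x (rfl | ⟨h, hh, rfl⟩)
    · exact le_max_right _ _
    · exact le_trans (hC h hh) (le_max_left _ _)
  refine ⟨Φ, ?_, ?_⟩
  · intro R R' hRR'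
    apply csSup_le_csSup (hbdd R') ⟨0, Set.mem_insert _ _⟩
    rintro x (rfl | ⟨h, hh, rfl⟩)
    · exact Set.mem_insert _ _
    · exact Set.mem_insert_of_mem _ ⟨h, le_trans hh hRR', rfl⟩
  · intro g h
    have e' : d' 1 (g⁻¹ * h) = d' g h := by
      have := hd'inv g 1 (g⁻¹ * h); simpa using this.symm
    have e : d 1 (g⁻¹ * h) = d g h := by
      have := hdinv g 1 (g⁻¹ * h); simpa using this.symm
    rw [← e', ← e]
    exact le_csSup (hbdd _) (Set.mem_insert_of_mem _ ⟨g⁻¹ * h, show d 1 (g⁻¹ * h) ≤ d 1 (g⁻¹ * h) from le_rfl, rfl⟩)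
end

section
/- Let G be a Polish group and H ≤ G an open subgroup of finite index. Then H (with the subspace topology) is coarsely bounded if and only if G is coarsely bounded. -/
open Pointwise

/-- Let `G` be a Polish group and `H ≤ G` an open subgroup of finite index.  Then `H`
(with the subspace topology) is coarsely bounded if and only if `G` is. -/
theorem finiteIndex_open_subgroup_cb_iff {G : Type*} [Group G] [TopologicalSpace G]
    [IsTopologicalGroup G] [PolishSpace G]
    (H : Subgroup G) (hopen : IsOpen (H : Set G)) (hfi : H.index ≠ 0) :
    IsCBIn H (Set.univ : Set H) ↔ IsCBIn G (Set.univ : Set G) := by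
  have hfin : Finite (G ⧸ H) := Nat.finite_of_card_ne_zero hfi
  constructor
  · -- H CB → G CB
    intro hH V hV
    have hVH : (Subtype.val ⁻¹' V : Set H) ∈ nhds (1 : H) :=
      continuous_subtype_val.continuousAt.preimage_mem_nhds hV
    obtain ⟨F', hF'fin, n, hn, hsub⟩ := hH _ hVH
    set T : Set G := Set.range (fun q : G ⧸ H => Quotient.out q) with hTdef
    refine ⟨Subtype.val '' F' ∪ T,
      (hF'fin.image _).union (Set.finite_range _), n + 1, by omega, ?_⟩
    intro g _
    set t : G := Quotient.out (QuotientGroup.mk g : G ⧸ H) with htdef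
    have hmem : t⁻¹ * g ∈ H :=
      QuotientGroup.eq.mp (QuotientGroup.out_eq' (QuotientGroup.mk g : G ⧸ H))
    set h' : H := ⟨t⁻¹ * g, hmem⟩ with hh'def
    have hh' : h' ∈ (F' * (Subtype.val ⁻¹' V)) ^ n := hsub (Set.mem_univ _)
    have himg : ((Subtype.val : H → G) '' ((F' * ((Subtype.val : H → G) ⁻¹' V)) ^ n) : Set G)
        = (((Subtype.val : H → G) '' F') * ((Subtype.val : H → G) '' ((Subtype.val : H → G) ⁻¹' V))) ^ n := by
      rw [show (Subtype.val : H → G) = ⇑H.subtype from rfl, Set.image_pow, Set.image_mul]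
    have hh'G : (↑h' : G) ∈ ((Subtype.val '' F' ∪ T) * V) ^ n := by
      have : (↑h' : G) ∈ (((Subtype.val : H → G) '' F') * ((Subtype.val : H → G) '' ((Subtype.val : H → G) ⁻¹' V))) ^ n := by
        rw [← himg]; exact ⟨h', hh', rfl⟩
      exact Set.pow_subset_pow_left
        (Set.mul_subset_mul Set.subset_union_left (Set.image_preimage_subset _ _)) this
    have htmem : t ∈ (Subtype.val '' F' ∪ T) * V := by
      have : t = t * 1 := by group
      rw [this]
      exact Set.mul_mem_mul (Set.mem_union_right _ ⟨_, rfl⟩) (mem_of_mem_nhds hV)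
    have hg : g = t * ↑h' := by
      simp only [hh'def]
      group
    rw [hg, pow_succ']
    exact Set.mul_mem_mul htmem hh'G
  · -- G CB → H CB
    intro hG W₀ hW₀
    obtain ⟨U, hU, hUW⟩ := (mem_nhds_subtype (H : Set G) 1 W₀).mp hW₀
    set W : Set G := U ∩ (H : Set G) with hWdef
    have hW1 : (1 : G) ∈ W := ⟨mem_of_mem_nhds hU, H.one_mem⟩
    have hWnhds : W ∈ nhds (1 : G) := Filter.inter_mem hU (hopen.mem_nhds H.one_mem)
    set T : Set G := Set.range (fun q : G ⧸ H => (Quotient.out q)⁻¹) with hTdef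
    have hTfin : T.Finite := Set.finite_range _
    set τ : G → G := fun g => (Quotient.out (QuotientGroup.mk g⁻¹ : G ⧸ H))⁻¹ with hτdef
    have hτT : ∀ g, τ g ∈ T := fun g => ⟨_, rfl⟩
    have hτH : ∀ g, g * (τ g)⁻¹ ∈ H := by
      intro g
      have h := QuotientGroup.eq.mp (QuotientGroup.out_eq' (QuotientGroup.mk g⁻¹ : G ⧸ H))
      have h2 := H.inv_mem h
      have : g * (τ g)⁻¹ = ((Quotient.out (QuotientGroup.mk g⁻¹ : G ⧸ H))⁻¹ * g⁻¹)⁻¹ := by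
        simp only [hτdef]; group
      rw [this]
      exact h2
    set V : Set G := ⋂ t ∈ T, (fun x => t * x * t⁻¹) ⁻¹' W with hVdef
    have hVnhds : V ∈ nhds (1 : G) := by
      refine (Filter.biInter_mem hTfin).mpr fun t _ => ?_
      have hc : Continuous fun x : G => t * x * t⁻¹ :=
        (continuous_const.mul continuous_id).mul continuous_const
      have h1 : (fun x : G => t * x * t⁻¹) 1 = 1 := by simp
      exact hc.continuousAt.preimage_mem_nhds (by simpa using hWnhds)
    have hVW : ∀ t ∈ T, ∀ v ∈ V, t * v * t⁻¹ ∈ W := by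
      intro t ht v hv
      exact Set.mem_iInter₂.mp hv t ht
    obtain ⟨F, hFfin, n, hn, hGsub⟩ := hG V hVnhds
    set T₁ : Set G := T ∪ {1} with hT₁def
    set F₁ : Set G := F ∪ {1} with hF₁def
    set F' : Set G := (T₁ * F₁ * T₁⁻¹) ∩ (H : Set G) with hF'def
    have hF'fin : F'.Finite :=
      Set.Finite.inter_of_left
        (((hTfin.union (Set.finite_singleton 1)).mul (hFfin.union (Set.finite_singleton 1))).mul
          (hTfin.union (Set.finite_singleton 1)).inv) _
    have h1T₁ : (1 : G) ∈ T₁ := Set.mem_union_right _ rfl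
    have h1F₁ : (1 : G) ∈ F₁ := Set.mem_union_right _ rfl
    have h1T₁inv : (1 : G) ∈ T₁⁻¹ := by
      rw [Set.mem_inv, inv_one]; exact h1T₁
    have key : ∀ m : ℕ, ∀ g ∈ (F * V) ^ m, g * (τ g)⁻¹ ∈ (F' * W) ^ (m + 1) := by
      intro m
      induction m with
      | zero =>
        intro g hg
        have hg1 : g = 1 := by simpa using hg
        subst hg1
        rw [pow_one]
        have hmemH : (1 : G) * (τ 1)⁻¹ ∈ H := hτH 1
        have hF'm : (1 : G) * (τ 1)⁻¹ ∈ F' := by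
          refine ⟨?_, hmemH⟩
          have : (1 : G) * (τ 1)⁻¹ = 1 * 1 * (τ 1)⁻¹ := by group
          rw [this]
          exact Set.mul_mem_mul (Set.mul_mem_mul h1T₁ h1F₁)
            (Set.inv_mem_inv.mpr (Set.mem_union_left _ (hτT 1)))
        have : (1 : G) * (τ 1)⁻¹ = ((1 : G) * (τ 1)⁻¹) * 1 := by group
        rw [this]
        exact Set.mul_mem_mul hF'm hW1
      | succ m ih =>
        intro g hg
        rw [pow_succ] at hg
        obtain ⟨g', hg', x, hx, rfl⟩ := hg
        obtain ⟨f, hf, v, hv, rfl⟩ := hx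
        have h1 : g' * (τ g')⁻¹ ∈ (F' * W) ^ (m + 1) := ih g' hg'
        have hth : τ g' * (f * v) * (τ (g' * (f * v)))⁻¹ ∈ H := by
          have ha := hτH g'
          have hb := hτH (g' * (f * v))
          have heq : τ g' * (f * v) * (τ (g' * (f * v)))⁻¹
              = (g' * (τ g')⁻¹)⁻¹ * (g' * (f * v) * (τ (g' * (f * v)))⁻¹) := by group
          rw [heq]
          exact H.mul_mem (H.inv_mem ha) hb
        have hw : τ (g' * (f * v)) * v * (τ (g' * (f * v)))⁻¹ ∈ W :=
          hVW _ (hτT _) v hv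
        have hfH : τ g' * f * (τ (g' * (f * v)))⁻¹ ∈ H := by
          have heq : τ g' * f * (τ (g' * (f * v)))⁻¹
              = (τ g' * (f * v) * (τ (g' * (f * v)))⁻¹)
                * (τ (g' * (f * v)) * v * (τ (g' * (f * v)))⁻¹)⁻¹ := by group
          rw [heq]
          exact H.mul_mem hth (H.inv_mem hw.2)
        have hfF' : τ g' * f * (τ (g' * (f * v)))⁻¹ ∈ F' := by
          refine ⟨?_, hfH⟩
          exact Set.mul_mem_mul
            (Set.mul_mem_mul (Set.mem_union_left _ (hτT g')) (Set.mem_union_left _ hf))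
            (Set.inv_mem_inv.mpr (Set.mem_union_left _ (hτT _)))
        have heq : g' * (f * v) * (τ (g' * (f * v)))⁻¹
            = (g' * (τ g')⁻¹) * ((τ g' * f * (τ (g' * (f * v)))⁻¹)
              * (τ (g' * (f * v)) * v * (τ (g' * (f * v)))⁻¹)) := by group
        rw [heq, pow_succ]
        exact Set.mul_mem_mul h1 (Set.mul_mem_mul hfF' hw)
    refine ⟨Subtype.val ⁻¹' F', hF'fin.preimage Subtype.val_injective.injOn, n + 2,
      by omega, ?_⟩
    intro x _
    have hx : (↑x : G) ∈ (F * V) ^ n := hGsub (Set.mem_univ _)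
    have hk := key n (↑x) hx
    have hτx : τ ↑x ∈ H := by
      have heq : τ (↑x : G) = ((↑x : G) * (τ ↑x)⁻¹)⁻¹ * ↑x := by group
      rw [heq]
      exact H.mul_mem (H.inv_mem (hτH _)) x.2
    have hτF' : τ (↑x : G) ∈ F' := by
      refine ⟨?_, hτx⟩
      have heq : τ (↑x : G) = τ ↑x * 1 * 1 := by group
      rw [heq]
      refine Set.mul_mem_mul (Set.mul_mem_mul (Set.mem_union_left _ (hτT _)) h1F₁) h1T₁inv
    have hxG : (↑x : G) ∈ (F' * W) ^ (n + 2) := by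
      have heq : (↑x : G) = ((↑x : G) * (τ ↑x)⁻¹) * (τ ↑x * 1) := by group
      rw [heq, pow_succ]
      exact Set.mul_mem_mul hk (Set.mul_mem_mul hτF' hW1)
    -- transfer to H
    have hsub1 : F' ⊆ Subtype.val '' (Subtype.val ⁻¹' F' : Set H) := by
      intro a ha
      exact ⟨⟨a, ha.2⟩, ha, rfl⟩
    have hsub2 : W ⊆ Subtype.val '' W₀ := by
      intro w hw
      exact ⟨⟨w, hw.2⟩, hUW hw.1, rfl⟩
    have himg : ((Subtype.val : H → G) '' (((Subtype.val ⁻¹' F' : Set H) * W₀) ^ (n + 2)) : Set G)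
        = (((Subtype.val : H → G) '' (Subtype.val ⁻¹' F' : Set H)) * ((Subtype.val : H → G) '' W₀)) ^ (n + 2) := by
      rw [show (Subtype.val : H → G) = ⇑H.subtype from rfl, Set.image_pow, Set.image_mul]
    have : (↑x : G) ∈ Subtype.val '' (((Subtype.val ⁻¹' F' : Set H) * W₀) ^ (n + 2)) := by
      rw [himg]
      exact Set.pow_subset_pow_left (Set.mul_subset_mul hsub1 hsub2) hxG
    obtain ⟨y, hy, hyx⟩ := this
    rwa [Subtype.val_injective hyx] at hy
end

section
/- Let F be the free group on a countably infinite set of generators. Consider the graph 𝒯 whose vertices are pairs (n, f) where n ≥ 1 is an integer and f : ℕ → F is a function with f(i) = 1 for all i < n and with finite support (f(i) ≠ 1 for only finitely many i), and where two vertices (n, f) and (m, g) are joined by an edge if and only if |n − m| = 1 and f(i) = g(i) for all i ≥ max(n, m). Then 𝒯 is a tree: it is connected and contains no cycles. -/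
/-- Vertices of the combinatorial model: pairs `(n, f)` where `n ≥ 1` and
`f : ℕ → F` (with `F` the free group on countably many generators) satisfies
`f i = 1` for all `i < n` and has finite support. -/
def ModelVertex : Type :=
  { p : ℕ × (ℕ → FreeGroup ℕ) //
    1 ≤ p.1 ∧ (∀ i < p.1, p.2 i = 1) ∧ {i | p.2 i ≠ 1}.Finite }

/-- The combinatorial model graph: `(n, f)` and `(m, g)` are adjacent iff
`|n − m| = 1` and `f i = g i` for all `i ≥ max n m`. -/
def modelGraph : SimpleGraph ModelVertex where
  Adj v w :=
    (v.1.1 = w.1.1 + 1 ∨ w.1.1 = v.1.1 + 1) ∧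
    ∀ i, max v.1.1 w.1.1 ≤ i → v.1.2 i = w.1.2 i
  symm := by
    constructor
    intro v w h
    exact ⟨h.1.symm, fun i hi => (h.2 i ((max_comm v.1.1 w.1.1).trans_le hi)).symm⟩
  loopless := by
    constructor
    intro v h
    rcases h.1 with h1 | h1 <;> omega

/-- The unique upward neighbor of a vertex. -/
def mgParent (v : ModelVertex) : ModelVertex :=
  ⟨(v.1.1 + 1, fun i => if i < v.1.1 + 1 then 1 else v.1.2 i), by
    refine ⟨by omega, fun i hi => if_pos hi, ?_⟩
    apply v.2.2.2.subset
    intro i hi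
    simp only [Set.mem_setOf_eq] at hi ⊢
    intro h
    apply hi
    split <;> simp [h]⟩

lemma mg_adj_parent (v : ModelVertex) : modelGraph.Adj v (mgParent v) := by
  refine ⟨Or.inr rfl, fun i hi => ?_⟩
  have : v.1.1 + 1 ≤ i := le_trans (le_max_right _ _) hi
  simp only [mgParent, if_neg (by omega : ¬ i < v.1.1 + 1)]

lemma mg_adj_eq_parent {v w : ModelVertex} (h : modelGraph.Adj v w)
    (hn : w.1.1 = v.1.1 + 1) : w = mgParent v := by
  apply Subtype.ext
  apply Prod.ext
  · exact hn
  · funext i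
    by_cases hi : i < v.1.1 + 1
    · have h1 : w.1.2 i = 1 := w.2.2.1 i (by omega)
      simp only [mgParent, if_pos hi, h1]
    · have h2 := h.2 i (by rw [hn]; simp; omega)
      simp only [mgParent, if_neg hi]
      exact h2.symm

/-- the vertex (N, 1) for N ≥ 1 -/
def mgTop (N : ℕ) (hN : 1 ≤ N) : ModelVertex :=
  ⟨(N, fun _ => 1), hN, fun _ _ => rfl, by simp⟩

lemma mg_reach_top (v : ModelVertex) (k : ℕ) (hk : ∀ i, v.1.1 + k ≤ i → v.1.2 i = 1) :
    modelGraph.Reachable v (mgTop (v.1.1 + k) (by have := v.2.1; omega)) := by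
  induction k generalizing v with
  | zero =>
    have : v = mgTop (v.1.1 + 0) (by have := v.2.1; omega) := by
      apply Subtype.ext
      apply Prod.ext
      · simp [mgTop]
      · funext i
        by_cases hi : i < v.1.1
        · simp [mgTop, v.2.2.1 i hi]
        · simp [mgTop, hk i (by omega)]
    rw [← this]
  | succ k ih =>
    have hp : ∀ i, (mgParent v).1.1 + k ≤ i → (mgParent v).1.2 i = 1 := by
      intro i hi
      simp only [mgParent] at hi ⊢
      split
      · rfl
      · exact hk i (by omega)
    have h2 := ih (mgParent v) hp
    have heq : (mgParent v).1.1 + k = v.1.1 + (k + 1) := by simp [mgParent]; omega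
    refine (mg_adj_parent v).reachable.trans ?_
    convert h2 using 2
    omega

lemma mg_top_reach (N M : ℕ) (hN : 1 ≤ N) (hM : N ≤ M) :
    modelGraph.Reachable (mgTop N hN) (mgTop M (le_trans hN hM)) := by
  induction M with
  | zero => omega
  | succ M ih =>
    rcases Nat.eq_or_lt_of_le hM with h | h
    · subst h; rfl
    · have hNM : N ≤ M := by omega
      refine (ih hNM).trans ?_
      apply SimpleGraph.Adj.reachable
      exact ⟨Or.inr rfl, fun i hi => rfl⟩

lemma mg_preconnected : modelGraph.Preconnected := by
  intro u v
  obtain ⟨Bu, hBu⟩ : ∃ B, ∀ i, B ≤ i → u.1.2 i = 1 := by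
    obtain ⟨B, hB⟩ := u.2.2.2.bddAbove
    exact ⟨B + 1, fun i hi => by
      by_contra h
      have := hB (show i ∈ _ from h)
      omega⟩
  obtain ⟨Bv, hBv⟩ : ∃ B, ∀ i, B ≤ i → v.1.2 i = 1 := by
    obtain ⟨B, hB⟩ := v.2.2.2.bddAbove
    exact ⟨B + 1, fun i hi => by
      by_contra h
      have := hB (show i ∈ _ from h)
      omega⟩
  set ku := Bu with hku
  have h1 := mg_reach_top u Bu (fun i hi => hBu i (by omega))
  have h2 := mg_reach_top v Bv (fun i hi => hBv i (by omega))
  refine h1.trans (SimpleGraph.Reachable.trans ?_ h2.symm)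
  rcases le_total (u.1.1 + Bu) (v.1.1 + Bv) with h | h
  · exact mg_top_reach _ _ _ h
  · exact (mg_top_reach _ _ _ h).symm

open SimpleGraph Walk in
lemma mg_acyclic : modelGraph.IsAcyclic := by
  classical
  intro v c hc
  have hne : c.support ≠ [] := c.support_ne_nil
  obtain ⟨m, hm, hmin⟩ : ∃ m ∈ c.support, ∀ a ∈ c.support, m.1.1 ≤ a.1.1 := by
    obtain ⟨m, hm1, hm2⟩ := Finset.exists_min_image c.support.toFinset (fun a => a.1.1)
      (by simp [List.toFinset_eq_empty_iff, hne, Finset.nonempty_iff_ne_empty])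
    exact ⟨m, List.mem_toFinset.mp hm1, fun a ha => hm2 a (List.mem_toFinset.mpr ha)⟩
  set c' := c.rotate m hm with hc'def
  have hc' : c'.IsCycle := hc.rotate hm
  have hsupp : ∀ a ∈ c'.support, a ∈ c.support := by
    intro a ha
    rcases List.mem_cons.mp (c'.support_eq_cons ▸ ha) with h | h
    · subst h; exact hm
    · have hrot := SimpleGraph.Walk.support_rotate c m hm
      exact List.mem_of_mem_tail (hrot.mem_iff.mp h)
  clear_value c'
  clear hc'def hc hm hne
  obtain ⟨x, hadj, p, rfl⟩ := not_nil_iff.mp hc'.not_nil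
  have hxmem : x ∈ c.support := hsupp x (by simp)
  have hxn : x.1.1 = m.1.1 + 1 := by
    have := hmin x hxmem
    rcases hadj.1 with h | h <;> omega
  have hx : x = mgParent m := mg_adj_eq_parent hadj hxn
  have hp : p.IsPath := ((cons_isCycle_iff p hadj).mp hc').1
  obtain ⟨y, hadj2, q, hq⟩ := Walk.exists_eq_cons_of_ne hadj.ne p.reverse
  have hymem : y ∈ c.support := by
    apply hsupp
    have : y ∈ p.reverse.support := by rw [hq]; simp
    rw [Walk.support_reverse] at this
    simp [List.mem_reverse.mp this]
  have hyn : y.1.1 = m.1.1 + 1 := by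
    have := hmin y hymem
    rcases hadj2.1 with h | h <;> omega
  have hy : y = mgParent m := mg_adj_eq_parent hadj2 hyn
  have hyx : y = x := hy.trans hx.symm
  subst hyx
  have hqpath : q.IsPath := by
    have := hp.reverse
    rw [hq] at this
    exact this.of_cons
  have hqnil : q = Walk.nil := (isPath_iff_eq_nil (p := q)).mp hqpath
  have hlen : p.length = 1 := by
    have : p.reverse.length = 1 := by rw [hq, hqnil]; simp
    rwa [Walk.length_reverse] at this
  have h3 := hc'.three_le_length
  simp [hlen] at h3

/-- The combinatorial model graph is a tree: connected and acyclic. -/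
theorem modelGraph_isTree : modelGraph.IsTree := by
  have : Nonempty ModelVertex := ⟨mgTop 1 le_rfl⟩
  exact ⟨⟨mg_preconnected⟩, mg_acyclic⟩
end

section
/- Let G be a topological group admitting a continuous unbounded ultranorm, i.e., a continuous function ℓ : G → [0,∞) with ℓ(1) = 0, ℓ(g⁻¹) = ℓ(g), ℓ(gh) ≤ max(ℓ(g), ℓ(h)) for all g,h ∈ G, and with ℓ unbounded on G. Then G is not coarsely bounded, and moreover no coarsely bounded subset of G generates G as a group, nor even generates a dense subgroup of G. -/
open Pointwise

/-- If a topological group `G` admits a continuous unbounded ultranorm, then `G` is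
not coarsely bounded, and no coarsely bounded subset of `G` generates `G` as a
group, nor even generates a dense subgroup of `G`. -/
theorem not_cb_of_unbounded_ultranorm {G : Type*} [Group G] [TopologicalSpace G]
    [IsTopologicalGroup G] (ℓ : G → ℝ)
    (hcont : Continuous ℓ) (hnonneg : ∀ g, 0 ≤ ℓ g) (hone : ℓ 1 = 0)
    (hinv : ∀ g, ℓ g⁻¹ = ℓ g) (hultra : ∀ g h, ℓ (g * h) ≤ max (ℓ g) (ℓ h))
    (hunbounded : ∀ M : ℝ, ∃ g : G, M < ℓ g) :
    ¬ IsCBIn G (Set.univ : Set G) ∧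
    ∀ A : Set G, IsCBIn G A →
      Subgroup.closure A ≠ ⊤ ∧ ¬ Dense ((Subgroup.closure A : Subgroup G) : Set G) := by
  -- Step 1: any CB set has bounded ℓ
  have key : ∀ A : Set G, IsCBIn G A → ∃ M : ℝ, 0 ≤ M ∧ ∀ x ∈ A, ℓ x ≤ M := by
    intro A hA
    have hV : ℓ ⁻¹' (Set.Iio 1) ∈ nhds (1 : G) := by
      apply hcont.continuousAt.preimage_mem_nhds
      rw [hone]
      exact Iio_mem_nhds one_pos
    obtain ⟨F, hF, n, hn, hsub⟩ := hA _ hV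
    -- bound on F
    obtain ⟨MF, hMF⟩ : ∃ MF : ℝ, ∀ f ∈ F, ℓ f ≤ MF := by
      rcases (hF.image ℓ).bddAbove with ⟨MF, hMF⟩
      exact ⟨MF, fun f hf => hMF ⟨f, hf, rfl⟩⟩
    set M := max MF 1 with hM
    have hM0 : (0:ℝ) ≤ M := le_trans zero_le_one (le_max_right _ _)
    -- bound on F * V
    have hFV : ∀ x ∈ F * ℓ ⁻¹' (Set.Iio 1), ℓ x ≤ M := by
      rintro x ⟨f, hf, v, hv, rfl⟩
      refine (hultra f v).trans (max_le ((hMF f hf).trans (le_max_left _ _))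
        ((le_of_lt hv).trans (le_max_right _ _)))
    -- bound on powers
    have hpow : ∀ m : ℕ, ∀ x ∈ (F * ℓ ⁻¹' (Set.Iio 1)) ^ m, ℓ x ≤ M := by
      intro m
      induction m with
      | zero =>
        intro x hx
        rw [pow_zero, Set.mem_one] at hx
        simpa [hx, hone] using hM0
      | succ k ih =>
        rw [pow_succ]
        rintro x ⟨y, hy, z, hz, rfl⟩
        exact (hultra y z).trans (max_le (ih y hy) (hFV z hz))
    exact ⟨M, hM0, fun x hx => hpow n x (hsub hx)⟩
  -- Step 2: bounded ℓ propagates to subgroup closure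
  have keycl : ∀ A : Set G, ∀ M : ℝ, 0 ≤ M → (∀ x ∈ A, ℓ x ≤ M) →
      ∀ x ∈ Subgroup.closure A, ℓ x ≤ M := by
    intro A M hM0 hbd x hx
    induction hx using Subgroup.closure_induction with
    | mem y hy => exact hbd y hy
    | one => simpa [hone] using hM0
    | mul y z _ _ hy hz => exact (hultra y z).trans (max_le hy hz)
    | inv y _ hy => simpa [hinv] using hy
  -- Step 3: bounded ℓ propagates to topological closure
  have keytc : ∀ S : Set G, ∀ M : ℝ, (∀ x ∈ S, ℓ x ≤ M) →
      ∀ x ∈ closure S, ℓ x ≤ M := by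
    intro S M hbd x hx
    exact closure_minimal hbd (isClosed_le hcont continuous_const) hx
  constructor
  · intro h
    obtain ⟨M, _, hM⟩ := key _ h
    obtain ⟨g, hg⟩ := hunbounded M
    exact absurd (hM g (Set.mem_univ g)) (not_le.mpr hg)
  · intro A hA
    obtain ⟨M, hM0, hM⟩ := key A hA
    have hcl := keycl A M hM0 hM
    constructor
    · intro htop
      obtain ⟨g, hg⟩ := hunbounded M
      exact absurd (hcl g (htop ▸ Subgroup.mem_top g)) (not_le.mpr hg)
    · intro hdense
      obtain ⟨g, hg⟩ := hunbounded M
      have : ℓ g ≤ M := keytc _ M hcl g (by rw [hdense.closure_eq]; trivial)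
      exact absurd this (not_le.mpr hg)
end

section
/- Let F be the free group on generators a₀, a₁, a₂, …, and let φ : F → F be the endomorphism determined by φ(a₀) = a₀ and φ(a_{i+1}) = a_i · a_{i+1} for every i ≥ 0. Then φ is an automorphism of F, and for every i ≥ 0 the reduced word representing φ⁻¹(a_i) contains an occurrence of the letter a₀ or a₀⁻¹. -/
/-- the inverse images of the generators -/
def freeGroupW : ℕ → FreeGroup ℕ
  | 0 => FreeGroup.of 0
  | (i + 1) => (freeGroupW i)⁻¹ * FreeGroup.of (i + 1)

/-- exponent-sum at generator 0 -/
def freeGroupE : FreeGroup ℕ →* Multiplicative ℤ :=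
  FreeGroup.lift fun i => if i = 0 then Multiplicative.ofAdd (1 : ℤ) else 1

lemma freeGroupE_w_ne_one : ∀ i, freeGroupE (freeGroupW i) ≠ 1 := by
  intro i
  induction i with
  | zero =>
      simp [freeGroupW, freeGroupE]
  | succ n ih =>
      have : freeGroupE (freeGroupW (n + 1)) = (freeGroupE (freeGroupW n))⁻¹ := by
        simp [freeGroupW, freeGroupE, map_mul, map_inv]
      rw [this]
      simpa using ih

/-- Let `F` be the free group on generators `a₀, a₁, a₂, …` and `φ : F → F` the
endomorphism with `φ(a₀) = a₀` and `φ(a_{i+1}) = a_i · a_{i+1}`.  Then `φ` is an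
automorphism of `F`, and for every `i` the reduced word representing `φ⁻¹(a_i)`
contains an occurrence of the letter `a₀` or `a₀⁻¹`. -/
theorem freeGroup_auto_inverse_hits_a0 (φ : FreeGroup ℕ →* FreeGroup ℕ)
    (h0 : φ (FreeGroup.of 0) = FreeGroup.of 0)
    (hsucc : ∀ i : ℕ, φ (FreeGroup.of (i + 1)) = FreeGroup.of i * FreeGroup.of (i + 1)) :
    Function.Bijective φ ∧
    ∃ ψ : FreeGroup ℕ →* FreeGroup ℕ,
      (∀ x, ψ (φ x) = x) ∧ (∀ x, φ (ψ x) = x) ∧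
      ∀ i : ℕ, ∃ b : Bool, ((0 : ℕ), b) ∈ (ψ (FreeGroup.of i)).toWord := by
  set ψ : FreeGroup ℕ →* FreeGroup ℕ := FreeGroup.lift freeGroupW with hψ
  have hψof : ∀ i, ψ (FreeGroup.of i) = freeGroupW i := fun i => FreeGroup.lift_apply_of
  have hφw : ∀ i, φ (freeGroupW i) = FreeGroup.of i := by
    intro i
    induction i with
    | zero => simpa [freeGroupW] using h0
    | succ n ih =>
        simp [freeGroupW, map_mul, map_inv, ih, hsucc n, mul_assoc]
  have hright : ∀ x, φ (ψ x) = x := by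
    have : φ.comp ψ = MonoidHom.id _ := by
      apply FreeGroup.ext_hom
      intro a
      simp [hψof, hφw]
    intro x
    exact congrFun (congrArg (fun f => f.toFun) this) x
  have hleft : ∀ x, ψ (φ x) = x := by
    have : ψ.comp φ = MonoidHom.id _ := by
      apply FreeGroup.ext_hom
      intro a
      cases a with
      | zero => simp [h0, hψof, freeGroupW]
      | succ n =>
          simp [hsucc n, map_mul, hψof, freeGroupW]
    intro x
    exact congrFun (congrArg (fun f => f.toFun) this) x
  refine ⟨⟨Function.LeftInverse.injective hleft, Function.RightInverse.surjective hright⟩,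
    ψ, hleft, hright, ?_⟩
  intro i
  by_contra h
  push_neg at h
  apply freeGroupE_w_ne_one i
  have hw : freeGroupW i = FreeGroup.mk ((ψ (FreeGroup.of i)).toWord) := by
    rw [FreeGroup.mk_toWord, hψof]
  rw [hw, freeGroupE, FreeGroup.lift_mk]
  apply List.prod_eq_one
  intro x hx
  rcases List.mem_map.1 hx with ⟨⟨a, b⟩, hmem, rfl⟩
  have ha : a ≠ 0 := by
    intro ha
    exact h b (ha ▸ hmem)
  cases b <;> simp [ha]
end
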